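/- arXiv:2501.07739 — 6 statements merged into one kernel-verified Lean document; each statement's English description precedes it below -/
import Mathlib

section
/- Let q be a prime power and let M be a simple GF(q)-representable paving matroid with no coloops that is not a circuit. If r(M) > q, then r(M) ≤ 2q and |E(M)| ≤ 4q. -/
namespace LoosePaper

open Set
open scoped Matroid

variable {α β : Type*}

/-- A circuit of a matroid: a minimal dependent set. -/
def Circuit (M : Matroid α) (C : Set α) : Prop :=
  M.Dep C ∧ ∀ D, M.Dep D → D ⊆ C → D = C

/-- The rank of a matroid: the (common) cardinality of its bases. -/
noncomputable def rank (M : Matroid α) : ℕ :=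
  sInf {n | ∃ B, M.IsBase B ∧ B.ncard = n}

/-- An element is loose if every circuit containing it has size at least the rank. -/
def Loose (M : Matroid α) (e : α) : Prop :=
  e ∈ M.E ∧ ∀ C, Circuit M C → e ∈ C → rank M ≤ C.ncard

/-- An element is free if every circuit containing it is spanning. -/
def FreeElt (M : Matroid α) (e : α) : Prop :=
  e ∈ M.E ∧ ∀ C, Circuit M C → e ∈ C → M.closure C = M.E

/-- A coloop: an element contained in every base. -/
def Coloop (M : Matroid α) (e : α) : Prop :=
  e ∈ M.E ∧ ∀ B, M.IsBase B → e ∈ B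

def NoColoops (M : Matroid α) : Prop := ∀ e, ¬ Coloop M e

/-- A matroid is simple if every pair of its elements is independent. -/
def Simple (M : Matroid α) : Prop :=
  ∀ e ∈ M.E, ∀ f ∈ M.E, M.Indep {e, f}

/-- A matroid is paving if every circuit has size at least the rank. -/
def Paving (M : Matroid α) : Prop :=
  ∀ C, Circuit M C → rank M ≤ C.ncard

/-- `M` is representable over the field `F`. -/
def Representable (M : Matroid α) (F : Type*) [Field F] : Prop :=
  ∃ (ι : Type) (v : α → ι → F),
    ∀ I, I ⊆ M.E → (M.Indep I ↔ LinearIndependent F (fun x : I => v x.1))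

/-- `N` is the vector matroid, on ground set all of `η`, of the matrix whose
column labelled by `c : η` is `A c`. -/
def IsVectorMatroidOn (F : Type*) [Field F] {η ι : Type*} (A : η → ι → F)
    (N : Matroid η) : Prop :=
  N.E = Set.univ ∧ ∀ I : Set η, (N.Indep I ↔ LinearIndependent F (fun x : I => A x.1))

/-- `φ` is an isomorphism from `M` to `N`. -/
def IsIsoTo (M : Matroid α) (N : Matroid β) (φ : α → β) : Prop :=
  Set.BijOn φ M.E N.E ∧ ∀ I, I ⊆ M.E → (M.Indep I ↔ N.Indep (φ '' I))

/-- The matrix `[I_r | D]` of the matroid `M_r`; the column `Sum.inl i` is the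
`i`-th standard basis vector, the column `Sum.inr 0` (the distinguished element `z`)
is the all-ones vector, and for `1 ≤ j ≤ r-1` the column `Sum.inr j` has ones
exactly in rows `0` and `j` (`0`-indexed). -/
def MrMatrix (r : ℕ) : (Fin r ⊕ Fin r) → Fin r → ZMod 2
  | Sum.inl i => fun k => if k = i then 1 else 0
  | Sum.inr j => fun k =>
      if j.val = 0 then 1 else if k.val = 0 ∨ k = j then 1 else 0

/-- The matrix `[I_r | D]` of the matroid `N_r`; the column `Sum.inr 0`
(the distinguished element `z`) is `(0,1,…,1)ᵀ`, and for `1 ≤ j ≤ r-2` the column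
`Sum.inr j` has ones exactly in rows `0`, `1` and `j+1` (`0`-indexed). -/
def NrMatrix (r : ℕ) : (Fin r ⊕ Fin (r - 1)) → Fin r → ZMod 2
  | Sum.inl i => fun k => if k = i then 1 else 0
  | Sum.inr j => fun k =>
      if j.val = 0 then (if k.val = 0 then 0 else 1)
      else if k.val = 0 ∨ k.val = 1 ∨ k.val = j.val + 1 then 1 else 0

/-- The matrix `[I_r | D]` of the matroid `L_r`; the columns of `D` are the all-ones
vector, `(1,1,0,…,0)ᵀ`, `(1,0,1,0,…,0)ᵀ` and `(0,1,1,0,…,0)ᵀ`. -/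
def LrMatrix (r : ℕ) : (Fin r ⊕ Fin 4) → Fin r → ZMod 2
  | Sum.inl i => fun k => if k = i then 1 else 0
  | Sum.inr j => fun k =>
      if j = 0 then 1
      else if j = 1 then (if k.val = 0 ∨ k.val = 1 then 1 else 0)
      else if j = 2 then (if k.val = 0 ∨ k.val = 2 then 1 else 0)
      else if k.val = 1 ∨ k.val = 2 then 1 else 0

/-- The matrix `[I_r | D]` of the matroid `J_r`; the columns of `D` are
`(0,1,1,…,1)ᵀ`, `(1,1,1,0,…,0)ᵀ`, `(1,1,0,1,0,…,0)ᵀ` and `(1,0,1,1,0,…,0)ᵀ`. -/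
def JrMatrix (r : ℕ) : (Fin r ⊕ Fin 4) → Fin r → ZMod 2
  | Sum.inl i => fun k => if k = i then 1 else 0
  | Sum.inr j => fun k =>
      if j = 0 then (if k.val = 0 then 0 else 1)
      else if j = 1 then (if k.val = 0 ∨ k.val = 1 ∨ k.val = 2 then 1 else 0)
      else if j = 2 then (if k.val = 0 ∨ k.val = 1 ∨ k.val = 3 then 1 else 0)
      else if k.val = 0 ∨ k.val = 2 ∨ k.val = 3 then 1 else 0

/-- A matrix over `GF(3)` whose vector matroid is `U_{2,4}`. -/
def U24Matrix : Fin 4 → Fin 2 → ZMod 3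
  | 0 => fun k => if k = 0 then 1 else 0
  | 1 => fun k => if k = 1 then 1 else 0
  | 2 => fun _ => 1
  | 3 => fun k => if k = 0 then 1 else 2

/-- A `GF(3)`-matrix representing the matroid obtained from a circuit
`{e, c_0, …, c_{n-1}}` (where `e` is the element `Sum.inl ()`) by 2-summing a copy
of `U_{2,4}` across each element `c_d` with `d ∈ D`.  For `d ∉ D` the element
`Sum.inr (d, 0)` is `c_d`, and for `d ∈ D` the elements `Sum.inr (d, j)`,
`j = 0, 1, 2`, are the three elements of the copy of `U_{2,4}` other than its
basepoint. -/
def thetaMatrix (n : ℕ) (D : Finset (Fin n)) :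
    (Unit ⊕ Fin n × Fin 3) → (Fin n ⊕ Fin n) → ZMod 3
  | Sum.inl _ => fun row => Sum.elim (fun _ => 1) (fun _ => 0) row
  | Sum.inr (d, j) => fun row =>
      let ed : (Fin n ⊕ Fin n) → ZMod 3 :=
        Sum.elim (fun i => if i = d then 1 else 0) (fun _ => 0)
      let wd : (Fin n ⊕ Fin n) → ZMod 3 :=
        Sum.elim (fun _ => 0) (fun i => if i = d then 1 else 0)
      if d ∈ D then
        (if j = 0 then wd row else if j = 1 then ed row + wd row else ed row - wd row)
      else ed row

/-- The ground set of the 2-sum construction: the circuit element `e`, the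
untouched circuit elements `c_d` for `d ∉ D`, and three `U_{2,4}`-elements for
each `d ∈ D`. -/
def thetaGround (n : ℕ) (D : Finset (Fin n)) : Set (Unit ⊕ Fin n × Fin 3) :=
  {x | ∀ d : Fin n, ∀ j : Fin 3, x = Sum.inr (d, j) → (j = 0 ∨ d ∈ D)}

/-! ### Auxiliary lemmas for Rajpal's theorem -/

section RajpalAux

variable {F : Type} [Field F] {M : Matroid α} {ι : Type}

theorem aux_sum_coe_set {β : Type*} [AddCommMonoid β] (S : Finset α) (f : α → β) :
    ∑ y : (↑S : Set α), f y.1 = ∑ x ∈ S, f x := by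
  rw [← Finset.sum_coe_sort S f]
  exact Fintype.sum_equiv (Equiv.subtypeEquivRight (fun x => Finset.mem_coe)) _ _ (fun y => rfl)

/-- translation: independence of a finset in terms of finite linear combinations -/
theorem aux_indep_iff_comb (v : α → ι → F)
    (hv : ∀ I, I ⊆ M.E → (M.Indep I ↔ LinearIndependent F (fun x : I => v x.1)))
    (S : Finset α) (hS : ↑S ⊆ M.E) :
    M.Indep ↑S ↔ ∀ c : α → F, ∑ x ∈ S, c x • v x = 0 → ∀ x ∈ S, c x = 0 := by
  rw [hv _ hS]
  classical
  constructor
  · intro h c hc x hx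
    rw [Fintype.linearIndependent_iff] at h
    exact h (fun y : (↑S : Set α) => c y.1)
      (by rw [aux_sum_coe_set S (fun x => c x • v x)]; exact hc) ⟨x, hx⟩
  · intro h
    rw [Fintype.linearIndependent_iff]
    intro g hg i
    set c : α → F := fun x => if hx : x ∈ S then g ⟨x, hx⟩ else 0 with hcdef
    have hcg : ∀ y : (↑S : Set α), c y.1 = g y := by
      intro y
      simp only [hcdef]
      rw [dif_pos (Finset.mem_coe.mp y.2)]
    have hsum : ∑ x ∈ S, c x • v x = 0 := by
      rw [← aux_sum_coe_set S (fun x => c x • v x), ← hg]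
      exact Finset.sum_congr rfl (fun y _ => by rw [hcg y])
    have := h c hsum i.1 (Finset.mem_coe.mp i.2)
    rwa [hcg i] at this

theorem aux_dep_of_comb (v : α → ι → F)
    (hv : ∀ I, I ⊆ M.E → (M.Indep I ↔ LinearIndependent F (fun x : I => v x.1)))
    (S : Finset α) (hS : ↑S ⊆ M.E) (c : α → F)
    (hsum : ∑ x ∈ S, c x • v x = 0) (hex : ∃ x ∈ S, c x ≠ 0) : M.Dep ↑S := by
  rw [Matroid.dep_iff]
  refine ⟨fun hind => ?_, hS⟩
  obtain ⟨x, hxS, hx⟩ := hex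
  exact hx ((aux_indep_iff_comb v hv S hS).mp hind c hsum x hxS)

theorem aux_exists_comb_of_dep (v : α → ι → F)
    (hv : ∀ I, I ⊆ M.E → (M.Indep I ↔ LinearIndependent F (fun x : I => v x.1)))
    (S : Finset α) (hdep : M.Dep ↑S) :
    ∃ c : α → F, (∀ x, x ∉ S → c x = 0) ∧ ∑ x ∈ S, c x • v x = 0 ∧ ∃ x ∈ S, c x ≠ 0 := by
  classical
  have hS : ↑S ⊆ M.E := hdep.subset_ground
  have hni := hdep.not_indep
  rw [aux_indep_iff_comb v hv S hS] at hni
  push_neg at hni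
  obtain ⟨c, hcsum, x, hxS, hx⟩ := hni
  refine ⟨fun y => if y ∈ S then c y else 0, fun y hy => if_neg hy, ?_, x, hxS,
    by simpa [hxS] using hx⟩
  rw [← hcsum]
  exact Finset.sum_congr rfl (fun y hy => by simp [hy])

/-- a normalized dependency on `insert z T` where `T` is independent. -/
theorem aux_exists_normalized [DecidableEq α] (v : α → ι → F)
    (hv : ∀ I, I ⊆ M.E → (M.Indep I ↔ LinearIndependent F (fun x : I => v x.1)))
    (T : Finset α) (z : α) (hzT : z ∉ T) (hTind : M.Indep ↑T)
    (hdep : M.Dep ↑(insert z T)) :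
    ∃ u : α → F, (∀ y, y ∉ insert z T → u y = 0) ∧ u z = 1 ∧
      ∑ x ∈ insert z T, u x • v x = 0 := by
  have hTE : ↑T ⊆ M.E := hTind.subset_ground
  obtain ⟨c, hcout, hcsum, hcex⟩ := aux_exists_comb_of_dep v hv _ hdep
  have hcz : c z ≠ 0 := by
    intro h0
    have hsumT : ∑ x ∈ T, c x • v x = 0 := by
      rw [Finset.sum_insert hzT, h0, zero_smul, zero_add] at hcsum
      exact hcsum
    have hzero := (aux_indep_iff_comb v hv T hTE).mp hTind c hsumT
    obtain ⟨x, hxS, hx⟩ := hcex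
    rcases Finset.mem_insert.mp hxS with rfl | hxT
    · exact hx h0
    · exact hx (hzero x hxT)
  refine ⟨fun y => c y * (c z)⁻¹, fun y hy => by simp only []; rw [hcout y hy, zero_mul], by
    simp only []; rw [mul_inv_cancel₀ hcz], ?_⟩
  have : ∀ x, (c x * (c z)⁻¹) • v x = (c z)⁻¹ • (c x • v x) := by
    intro x; rw [smul_smul, mul_comm]
  simp_rw [this]
  rw [← Finset.smul_sum, hcsum, smul_zero]

/-- every dependent finite set contains a circuit. -/
theorem aux_exists_circuit_subset (M : Matroid α) :
    ∀ n (S : Finset α), S.card ≤ n → M.Dep ↑S →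
      ∃ C : Finset α, C ⊆ S ∧ Circuit M ↑C := by
  classical
  intro n
  induction n with
  | zero =>
    intro S hcard hdep
    rw [Nat.le_zero, Finset.card_eq_zero] at hcard
    subst hcard
    exact absurd M.empty_indep (by simpa using hdep.not_indep)
  | succ n ih =>
    intro S hcard hdep
    by_cases h : ∀ D, M.Dep D → D ⊆ ↑S → D = ↑S
    · exact ⟨S, Finset.Subset.refl S, hdep, h⟩
    · push_neg at h
      obtain ⟨D, hD, hDS, hne⟩ := h
      have hDfin : D.Finite := S.finite_toSet.subset hDS
      have hcoe : ↑hDfin.toFinset = D := hDfin.coe_toFinset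
      have hsub : hDfin.toFinset ⊆ S := by
        rw [← Finset.coe_subset, hcoe]; exact hDS
      have hlt : hDfin.toFinset.card ≤ n := by
        have hss : hDfin.toFinset ⊂ S := by
          refine Finset.ssubset_iff_subset_ne.mpr ⟨hsub, fun hcontra => hne ?_⟩
          rw [← hcoe, hcontra]
        have := Finset.card_lt_card hss
        omega
      obtain ⟨C, hCD, hC⟩ := ih hDfin.toFinset hlt (by rwa [hcoe])
      exact ⟨C, hCD.trans hsub, hC⟩

/-- in a paving matroid, every dependent finset has at least `rank M` elements. -/
theorem aux_dep_card (hpav : Paving M) (S : Finset α) (hdep : M.Dep ↑S) :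
    rank M ≤ S.card := by
  obtain ⟨C, hCS, hC⟩ := aux_exists_circuit_subset M S.card S le_rfl hdep
  have h1 := hpav ↑C hC
  rw [Set.ncard_coe_finset] at h1
  exact h1.trans (Finset.card_le_card hCS)

theorem aux_indep_of_small (hpav : Paving M) (S : Finset α) (hS : ↑S ⊆ M.E)
    (h : S.card < rank M) : M.Indep ↑S := by
  by_contra hni
  exact absurd (aux_dep_card hpav S (Matroid.dep_iff.mpr ⟨hni, hS⟩)) (by omega)

/-- there is a finite base whose cardinality is `rank M`. -/
theorem aux_exists_base_finset (hpos : 0 < rank M) :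
    ∃ B : Finset α, M.IsBase ↑B ∧ B.card = rank M := by
  obtain ⟨B, hB⟩ := M.exists_isBase
  have hmem : rank M ∈ {n | ∃ B, M.IsBase B ∧ B.ncard = n} :=
    Nat.sInf_mem ⟨B.ncard, B, hB, rfl⟩
  obtain ⟨B0, hB0, hcard⟩ := hmem
  have hfin : B0.Finite := by
    by_contra h
    rw [Set.Infinite.ncard h] at hcard
    omega
  refine ⟨hfin.toFinset, by rwa [hfin.coe_toFinset], ?_⟩
  rw [← hcard, Set.ncard_eq_toFinset_card B0 hfin]

end RajpalAux

section RajpalCount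

variable {F : Type} [Field F] [Fintype F]

open Classical in
/-- The key Plotkin-type counting lemma: `q+1` words in a pencil, each of weight
at least `N`, supported on `S`, where each coordinate is nonzero in at most `q`
of them. -/
theorem aux_count (q : ℕ) (hq : Fintype.card F = q) (S : Finset α) (u w : α → F) (N : ℕ)
    (hwt : ∀ a b : F, ¬(a = 0 ∧ b = 0) →
      N ≤ (S.filter (fun x => a * u x + b * w x ≠ 0)).card) :
    (q + 1) * N ≤ S.card * q := by
  classical
  have keyx : ∀ x : α,
      ((∑ l : F, if 1 * u x + l * w x ≠ 0 then 1 else 0) +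
        (if 0 * u x + 1 * w x ≠ 0 then 1 else 0)) ≤ q := by
    intro x
    by_cases hw : w x = 0
    · have h2 : (if 0 * u x + 1 * w x ≠ 0 then 1 else 0) = 0 := by simp [hw]
      have h1 : (∑ l : F, if 1 * u x + l * w x ≠ 0 then 1 else 0) ≤ q := by
        by_cases hu : u x = 0
        · simp [hw, hu]
        · have hallone : ∀ l : F, (if 1 * u x + l * w x ≠ 0 then 1 else 0) = 1 := by
            intro l; simp [hw, hu]
          simp_rw [hallone]
          rw [Finset.sum_const, Finset.card_univ, hq, smul_eq_mul, mul_one]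
      omega
    · have hsplit := Finset.card_filter_add_card_filter_not
        (s := (Finset.univ : Finset F)) (p := fun l => 1 * u x + l * w x ≠ 0)
      rw [Finset.card_univ, hq] at hsplit
      have hone : (Finset.univ.filter (fun l : F => ¬(1 * u x + l * w x ≠ 0))).card = 1 := by
        have hset : Finset.univ.filter (fun l : F => ¬(1 * u x + l * w x ≠ 0))
            = {-(u x) / w x} := by
          ext lam
          simp only [Finset.mem_filter, Finset.mem_univ, true_and, not_not,
            Finset.mem_singleton, one_mul]
          constructor
          · intro h; rw [eq_div_iff hw]; linear_combination h
          · intro h; rw [eq_div_iff hw] at h; linear_combination h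
        rw [hset, Finset.card_singleton]
      have hsum : (∑ l : F, if 1 * u x + l * w x ≠ 0 then 1 else 0)
          = (Finset.univ.filter (fun l : F => 1 * u x + l * w x ≠ 0)).card := by
        rw [Finset.card_filter]
      have h2 : (if 0 * u x + 1 * w x ≠ 0 then 1 else 0) = 1 := by
        simp [hw]
      rw [hsum, h2]
      omega
  have h1 : ∀ l : F, N ≤ (S.filter (fun x => 1 * u x + l * w x ≠ 0)).card :=
    fun l => hwt 1 l (by simp)
  have h2 : N ≤ (S.filter (fun x => 0 * u x + 1 * w x ≠ 0)).card :=
    hwt 0 1 (by simp)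
  have step1 : (q + 1) * N ≤
      (∑ l : F, (S.filter (fun x => 1 * u x + l * w x ≠ 0)).card) +
        (S.filter (fun x => 0 * u x + 1 * w x ≠ 0)).card := by
    have : (q : ℕ) * N = ∑ _l : F, N := by
      rw [Finset.sum_const, Finset.card_univ, hq, smul_eq_mul]
    calc (q + 1) * N = q * N + N := by ring
      _ ≤ _ := add_le_add (this ▸ Finset.sum_le_sum (fun l _ => h1 l)) h2
  have step2 : (∑ l : F, (S.filter (fun x => 1 * u x + l * w x ≠ 0)).card) +
      (S.filter (fun x => 0 * u x + 1 * w x ≠ 0)).card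
      = ∑ x ∈ S, ((∑ l : F, if 1 * u x + l * w x ≠ 0 then 1 else 0) +
          (if 0 * u x + 1 * w x ≠ 0 then 1 else 0)) := by
    rw [Finset.sum_add_distrib]
    congr 1
    · simp_rw [Finset.card_filter]
      rw [Finset.sum_comm]
    · rw [Finset.card_filter]
  calc (q + 1) * N ≤ _ := step1
    _ = _ := step2
    _ ≤ ∑ _x ∈ S, q := Finset.sum_le_sum (fun x _ => keyx x)
    _ = S.card * q := by rw [Finset.sum_const, smul_eq_mul]

end RajpalCount

section RajpalLin

variable {F : Type} [Field F] {ι : Type}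

/-- Linear algebra bound: vectors indexed by `T` that lie in the kernel of a nonzero
functional on the coordinates of a spanning finset `B` number at most `|B| - 1`. -/
theorem aux_lin_bound [DecidableEq α] (v : α → ι → F) (B : Finset α) (b1 b2 : α)
    (hb1 : b1 ∈ B) (hb2 : b2 ∈ B) (hb12 : b1 ≠ b2) (a b : F) (hab : ¬(a = 0 ∧ b = 0))
    (T : Finset α) (d : α → α → F)
    (hd : ∀ x ∈ T, v x = ∑ bb ∈ B, d x bb • v bb)
    (hz : ∀ x ∈ T, a * d x b1 + b * d x b2 = 0)
    (hind : LinearIndependent F (fun x : (↑T : Set α) => v x.1)) :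
    T.card ≤ B.card - 1 := by
  classical
  set φ : ({y // y ∈ B} → F) →ₗ[F] F :=
    a • (LinearMap.proj (⟨b1, hb1⟩ : {y // y ∈ B})) + b • (LinearMap.proj ⟨b2, hb2⟩) with hφdef
  have hφapp : ∀ c : {y // y ∈ B} → F, φ c = a * c ⟨b1, hb1⟩ + b * c ⟨b2, hb2⟩ := by
    intro c
    simp [hφdef, LinearMap.proj_apply, smul_eq_mul]
  set L : ({y // y ∈ B} → F) →ₗ[F] (ι → F) :=
    { toFun := fun c => ∑ bb : {y // y ∈ B}, c bb • v bb.1,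
      map_add' := by
        intro c1 c2
        simp [add_smul, Finset.sum_add_distrib],
      map_smul' := by
        intro r c
        simp only [RingHom.id_apply]
        rw [Finset.smul_sum]
        exact Finset.sum_congr rfl (fun bb _ => by rw [Pi.smul_apply, smul_eq_mul, smul_smul]) } with hLdef
  have hmem : ∀ x : (↑T : Set α), (fun bb : {y // y ∈ B} => d x.1 bb.1) ∈ LinearMap.ker φ := by
    intro x
    rw [LinearMap.mem_ker, hφapp]
    exact hz x.1 (Finset.mem_coe.mp x.2)
  set fam : (↑T : Set α) → LinearMap.ker φ := fun x => ⟨_, hmem x⟩ with hfamdef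
  have hLd : ∀ x : (↑T : Set α), L (fun bb : {y // y ∈ B} => d x.1 bb.1) = v x.1 := by
    intro x
    have h1 : L (fun bb : {y // y ∈ B} => d x.1 bb.1)
        = ∑ bb : {y // y ∈ B}, d x.1 bb.1 • v bb.1 := rfl
    rw [h1, Finset.sum_coe_sort B (fun bb => d x.1 bb • v bb)]
    exact (hd x.1 (Finset.mem_coe.mp x.2)).symm
  have hindfam : LinearIndependent F fam := by
    apply LinearIndependent.of_comp ((LinearMap.ker φ).subtype)
    apply LinearIndependent.of_comp L
    have heq : (⇑L ∘ ⇑(LinearMap.ker φ).subtype ∘ fam) = fun x : (↑T : Set α) => v x.1 :=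
      funext (fun x => hLd x)
    rw [heq]
    exact hind
  have hcard := hindfam.fintype_card_le_finrank
  have hTcard : Fintype.card (↑T : Set α) = T.card := by
    rw [Fintype.card_congr (Equiv.subtypeEquivRight (fun x => Finset.mem_coe))]
    exact Fintype.card_coe T
  have hsurj : Function.Surjective φ := by
    intro y
    rcases not_and_or.mp hab with ha | hb
    · refine ⟨fun bb => if bb = ⟨b1, hb1⟩ then y * a⁻¹ else 0, ?_⟩
      rw [hφapp]
      have hne : (⟨b2, hb2⟩ : {y // y ∈ B}) ≠ ⟨b1, hb1⟩ := by
        simp only [ne_eq, Subtype.mk.injEq]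
        exact fun h => hb12 h.symm
      rw [if_pos rfl, if_neg hne]
      field_simp
      simp
    · refine ⟨fun bb => if bb = ⟨b2, hb2⟩ then y * b⁻¹ else 0, ?_⟩
      rw [hφapp]
      have hne : (⟨b1, hb1⟩ : {y // y ∈ B}) ≠ ⟨b2, hb2⟩ := by
        simp only [ne_eq, Subtype.mk.injEq]
        exact hb12
      rw [if_pos rfl, if_neg hne]
      field_simp
      simp
  have hrange : LinearMap.range φ = ⊤ := LinearMap.range_eq_top.mpr hsurj
  have hrn := LinearMap.finrank_range_add_finrank_ker φ
  rw [hrange, finrank_top, Module.finrank_self] at hrn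
  have hW : Module.finrank F ({y // y ∈ B} → F) = B.card := by
    rw [Module.finrank_fintype_fun_eq_card, Fintype.card_coe]
  rw [hW] at hrn
  rw [hTcard] at hcard
  omega

end RajpalLin

section RajpalMain

variable {F : Type} [Field F] [Fintype F] {M : Matroid α} {ι : Type}

/-- Lemma B: two fundamental-type dependencies through an independent set give
the Plotkin bound `(q+1) r(M) ≤ (|T|+2) q`. -/
theorem aux_lemB [DecidableEq α] (q : ℕ) (hq : Fintype.card F = q) (v : α → ι → F)
    (hv : ∀ I, I ⊆ M.E → (M.Indep I ↔ LinearIndependent F (fun x : I => v x.1)))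
    (hpav : Paving M) (T : Finset α) (z0 z1 : α) (hz01 : z0 ≠ z1)
    (hz0T : z0 ∉ T) (hz1T : z1 ∉ T) (hTind : M.Indep ↑T)
    (hd0 : M.Dep ↑(insert z0 T)) (hd1 : M.Dep ↑(insert z1 T)) :
    (q + 1) * rank M ≤ (T.card + 2) * q := by
  obtain ⟨u, huout, huz, husum⟩ := aux_exists_normalized v hv T z0 hz0T hTind hd0
  obtain ⟨w, hwout, hwz, hwsum⟩ := aux_exists_normalized v hv T z1 hz1T hTind hd1
  set S : Finset α := insert z0 (insert z1 T) with hSdef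
  have hz0S : z0 ∉ insert z1 T := by
    simp only [Finset.mem_insert]
    push_neg
    exact ⟨hz01, hz0T⟩
  have hScard : S.card = T.card + 2 := by
    rw [hSdef, Finset.card_insert_of_notMem hz0S, Finset.card_insert_of_notMem hz1T]
  have hSE : ↑S ⊆ M.E := by
    rw [hSdef]
    push_cast
    refine Set.insert_subset ?_ (Set.insert_subset ?_ hTind.subset_ground)
    · exact (Matroid.dep_iff.mp hd0).2 (by simp)
    · exact (Matroid.dep_iff.mp hd1).2 (by simp)
  have husumS : ∑ x ∈ S, u x • v x = 0 := by
    rw [← husum]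
    refine (Finset.sum_subset ?_ ?_).symm
    · intro x hx
      rw [hSdef]
      rcases Finset.mem_insert.mp hx with rfl | hxT
      · exact Finset.mem_insert_self _ _
      · exact Finset.mem_insert_of_mem (Finset.mem_insert_of_mem hxT)
    · intro x _ hx
      rw [huout x hx, zero_smul]
  have hwsumS : ∑ x ∈ S, w x • v x = 0 := by
    rw [← hwsum]
    refine (Finset.sum_subset ?_ ?_).symm
    · intro x hx
      exact Finset.mem_insert_of_mem hx
    · intro x _ hx
      rw [hwout x hx, zero_smul]
  have hcount := aux_count q hq S u w (rank M) ?_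
  · rwa [hScard] at hcount
  intro a b hab
  classical
  set g : α → F := fun x => a * u x + b * w x with hgdef
  have hgsum : ∑ x ∈ S, g x • v x = 0 := by
    have : ∀ x, g x • v x = a • (u x • v x) + b • (w x • v x) := by
      intro x
      simp only [hgdef, add_smul, smul_smul]
    simp_rw [this]
    rw [Finset.sum_add_distrib, ← Finset.smul_sum, ← Finset.smul_sum, husumS, hwsumS,
      smul_zero, smul_zero, add_zero]
  set T' : Finset α := S.filter (fun x => g x ≠ 0) with hT'def
  have hT'sum : ∑ x ∈ T', g x • v x = 0 := by
    rw [hT'def, Finset.sum_filter_of_ne, hgsum]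
    intro x _ hx
    intro hgx
    exact hx (by rw [hgx, zero_smul])
  have hT'ex : ∃ x ∈ T', g x ≠ 0 := by
    by_cases ha : a = 0
    · have hb : b ≠ 0 := fun hb => hab ⟨ha, hb⟩
      have hgz1 : g z1 = b := by
        have huz1 : u z1 = 0 := huout z1 (by
          simp only [Finset.mem_insert]
          push_neg
          exact ⟨fun h => hz01 h.symm, hz1T⟩)
        simp [hgdef, huz1, hwz, ha]
      exact ⟨z1, Finset.mem_filter.mpr ⟨Finset.mem_insert_of_mem (Finset.mem_insert_self _ _),
        by rw [hgz1]; exact hb⟩, by rw [hgz1]; exact hb⟩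
    · have hgz0 : g z0 = a := by
        have hwz0 : w z0 = 0 := hwout z0 (by
          simp only [Finset.mem_insert]
          push_neg
          exact ⟨hz01, hz0T⟩)
        simp [hgdef, hwz0, huz]
      exact ⟨z0, Finset.mem_filter.mpr ⟨Finset.mem_insert_self _ _,
        by rw [hgz0]; exact ha⟩, by rw [hgz0]; exact ha⟩
  have hT'E : ↑T' ⊆ M.E := fun x hx => hSE (Finset.mem_coe.mpr
    (Finset.filter_subset _ _ (Finset.mem_coe.mp hx)))
  have hdepT' : M.Dep ↑T' := aux_dep_of_comb v hv T' hT'E g hT'sum hT'ex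
  exact aux_dep_card hpav T' hdepT'

/-- the "small flat" lemma: a finset all of whose `rank M`-subsets are dependent
has at most `rank M` elements (when `q < rank M`). -/
theorem aux_small_flat [DecidableEq α] (q : ℕ) (hq : Fintype.card F = q) (v : α → ι → F)
    (hv : ∀ I, I ⊆ M.E → (M.Indep I ↔ LinearIndependent F (fun x : I => v x.1)))
    (hpav : Paving M) (hrank : q < rank M) (Z : Finset α) (hZE : ↑Z ⊆ M.E)
    (hdep : ∀ T : Finset α, T ⊆ Z → T.card = rank M → M.Dep ↑T) :
    Z.card ≤ rank M := by
  by_contra hcon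
  push_neg at hcon
  obtain ⟨Z', hZ'Z, hZ'card⟩ := Finset.exists_subset_card_eq (n := rank M + 1) hcon
  have hr1 : 1 ≤ rank M := by omega
  obtain ⟨T0, hT0Z', hT0card⟩ := Finset.exists_subset_card_eq (s := Z') (n := rank M - 1) (by omega)
  have hsd : (Z' \ T0).card = 2 := by
    rw [Finset.card_sdiff_of_subset hT0Z']
    omega
  obtain ⟨z0, z1, hz01, hzz⟩ := Finset.card_eq_two.mp hsd
  have hz0 : z0 ∈ Z' \ T0 := by rw [hzz]; simp
  have hz1 : z1 ∈ Z' \ T0 := by rw [hzz]; simp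
  have hz0T0 : z0 ∉ T0 := (Finset.mem_sdiff.mp hz0).2
  have hz1T0 : z1 ∉ T0 := (Finset.mem_sdiff.mp hz1).2
  have hT0E : ↑T0 ⊆ M.E := fun x hx => hZE (hZ'Z (hT0Z' (Finset.mem_coe.mp hx)))
  have hT0ind : M.Indep ↑T0 := aux_indep_of_small hpav T0 hT0E (by omega)
  have hins : ∀ z, z ∈ Z' \ T0 → z ∉ T0 → M.Dep ↑(insert z T0) := by
    intro z hz hzT0
    refine hdep (insert z T0) ?_ ?_
    · intro x hx
      rcases Finset.mem_insert.mp hx with rfl | hxT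
      · exact hZ'Z (Finset.mem_sdiff.mp hz).1
      · exact hZ'Z (hT0Z' hxT)
    · rw [Finset.card_insert_of_notMem hzT0]
      omega
  have hlem := aux_lemB q hq v hv hpav T0 z0 z1 hz01 hz0T0 hz1T0 hT0ind
    (hins z0 hz0 hz0T0) (hins z1 hz1 hz1T0)
  rw [hT0card] at hlem
  have hle : (q + 1) * rank M ≤ (rank M + 1) * q := by
    have : rank M - 1 + 2 = rank M + 1 := by omega
    rwa [this] at hlem
  rw [add_mul, add_mul, one_mul, one_mul, mul_comm (rank M) q] at hle
  have := Nat.le_of_add_le_add_left hle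
  omega

end RajpalMain

/-- Rajpal's theorem: if `M` is a simple `GF(q)`-representable
paving matroid with no coloops that is not a circuit and `r(M) > q`, then
`r(M) ≤ 2q` and `|E(M)| ≤ 4q`. -/
theorem rajpal_paving_bound {α : Type*} (q : ℕ) (F : Type) [Field F] [Fintype F]
    (hq : Fintype.card F = q) (M : Matroid α) (hsimple : Simple M)
    (hrep : Representable M F) (hpaving : Paving M) (hcoloops : NoColoops M)
    (hnotcircuit : ¬ Circuit M M.E) (hrank : q < rank M) :
    rank M ≤ 2 * q ∧ M.E.ncard ≤ 4 * q := by
  classical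
  obtain ⟨ι, v, hv⟩ := hrep
  have hq2 : 2 ≤ q := by rw [← hq]; exact Fintype.one_lt_card
  have hrpos : 0 < rank M := by omega
  obtain ⟨Bf, hB, hBcard⟩ := aux_exists_base_finset (M := M) hrpos
  have hBE : ↑Bf ⊆ M.E := hB.subset_ground
  have hBind : M.Indep ↑Bf := hB.indep
  have hbase_encard : ∀ B' : Set α, M.IsBase B' → B'.encard = (rank M : ℕ∞) := by
    intro B' hB'
    rw [hB'.encard_eq_encard_of_isBase hB, Set.encard_coe_eq_coe_finsetCard, hBcard]
  -- there are two distinct elements outside the base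
  have hA2 : ∃ e ∈ M.E \ ↑Bf, ∃ f ∈ M.E \ ↑Bf, e ≠ f := by
    by_contra hcon
    push_neg at hcon
    by_cases hemp : M.E \ ↑Bf = ∅
    · have hEB : M.E = ↑Bf := by
        apply subset_antisymm _ hBE
        intro x hx
        by_contra hxB
        exact Set.eq_empty_iff_forall_notMem.mp hemp x ⟨hx, hxB⟩
      obtain ⟨b, hb⟩ : Bf.Nonempty := Finset.card_pos.mp (by omega)
      refine hcoloops b ⟨hEB ▸ (Finset.mem_coe.mpr hb), ?_⟩
      intro B' hB'
      have hsub : B' ⊆ ↑Bf := hEB ▸ hB'.subset_ground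
      have hBeq : B' = ↑Bf := by
        apply (Bf.finite_toSet).eq_of_subset_of_encard_le' hsub
        rw [hbase_encard B' hB', Set.encard_coe_eq_coe_finsetCard, hBcard]
      rw [hBeq]
      exact Finset.mem_coe.mpr hb
    · obtain ⟨e, he⟩ := Set.nonempty_iff_ne_empty.mpr hemp
      have heB : e ∉ Bf := fun h => he.2 (Finset.mem_coe.mpr h)
      have heE : e ∈ M.E := he.1
      have hEeq : M.E = ↑(insert e Bf) := by
        rw [Finset.coe_insert]
        apply subset_antisymm
        · intro x hx
          by_cases hxB : x ∈ (↑Bf : Set α)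
          · exact Set.mem_insert_of_mem _ hxB
          · have hx' : x ∈ M.E \ ↑Bf := ⟨hx, hxB⟩
            rw [hcon x hx' e he]
            exact Set.mem_insert _ _
        · exact Set.insert_subset heE hBE
      have hdepE : M.Dep ↑(insert e Bf) := by
        rw [Finset.coe_insert]
        exact hB.insert_dep ⟨heE, fun h => heB (Finset.mem_coe.mp h)⟩
      obtain ⟨C, hCsub, hC⟩ := aux_exists_circuit_subset M (insert e Bf).card
        (insert e Bf) le_rfl hdepE
      have hCr : rank M ≤ C.card := by
        have := hpaving ↑C hC
        rwa [Set.ncard_coe_finset] at this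
      by_cases hCeq : C = insert e Bf
      · apply hnotcircuit
        rw [hEeq, ← hCeq]
        exact hC
      · have hCss : C ⊂ insert e Bf := Finset.ssubset_iff_subset_ne.mpr ⟨hCsub, hCeq⟩
        obtain ⟨x, hxmem, hxC⟩ := Finset.exists_of_ssubset hCss
        have hxE : x ∈ M.E := by
          rw [hEeq]
          exact Finset.mem_coe.mpr hxmem
        refine hcoloops x ⟨hxE, ?_⟩
        intro B' hB'
        by_contra hxB'
        have hsub : B' ⊆ ↑((insert e Bf).erase x) := by
          intro y hy
          have hyE : y ∈ M.E := hB'.subset_ground hy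
          rw [hEeq] at hyE
          exact Finset.mem_coe.mpr (Finset.mem_erase.mpr
            ⟨fun h => hxB' (h ▸ hy), Finset.mem_coe.mp hyE⟩)
        have hcard' : ((insert e Bf).erase x).card = rank M := by
          rw [Finset.card_erase_of_mem hxmem, Finset.card_insert_of_notMem heB, hBcard]
          omega
        have hBeq : B' = ↑((insert e Bf).erase x) := by
          apply (Finset.finite_toSet _).eq_of_subset_of_encard_le' hsub
          rw [hbase_encard B' hB', Set.encard_coe_eq_coe_finsetCard, hcard']
        have hCsubB' : ↑C ⊆ B' := by
          rw [hBeq]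
          intro y hy
          have hyC := Finset.mem_coe.mp hy
          exact Finset.mem_coe.mpr (Finset.mem_erase.mpr
            ⟨fun h => hxC (h ▸ hyC), hCsub hyC⟩)
        exact hC.1.not_indep (hB'.indep.subset hCsubB')
  obtain ⟨e, he, f, hf, hef⟩ := hA2
  have heB : e ∉ Bf := fun h => he.2 (Finset.mem_coe.mpr h)
  have hfB : f ∉ Bf := fun h => hf.2 (Finset.mem_coe.mpr h)
  have hdep_e : M.Dep ↑(insert e Bf) := by
    rw [Finset.coe_insert]
    exact hB.insert_dep ⟨he.1, fun h => heB (Finset.mem_coe.mp h)⟩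
  have hdep_f : M.Dep ↑(insert f Bf) := by
    rw [Finset.coe_insert]
    exact hB.insert_dep ⟨hf.1, fun h => hfB (Finset.mem_coe.mp h)⟩
  have hlemB := aux_lemB q hq v hv hpaving Bf e f hef heB hfB hBind hdep_e hdep_f
  rw [hBcard] at hlemB
  have hr2q : rank M ≤ 2 * q := by
    rw [add_mul, add_mul, one_mul, mul_comm (rank M) q] at hlemB
    have := Nat.le_of_add_le_add_left hlemB
    omega
  refine ⟨hr2q, ?_⟩
  by_cases hfin : M.E.Finite
  swap
  · rw [Set.Infinite.ncard hfin]
    exact Nat.zero_le _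
  set SE : Finset α := hfin.toFinset with hSEdef
  have hSEcoe : ↑SE = M.E := hfin.coe_toFinset
  set n := SE.card with hndef
  have hncard : M.E.ncard = n := by
    rw [Set.ncard_eq_toFinset_card M.E hfin]
  obtain ⟨b1, hb1, b2, hb2, hb12⟩ := Finset.one_lt_card.mp (show 1 < Bf.card by omega)
  -- coordinates of each element of the ground set with respect to the base
  have hdex : ∀ x : α, ∃ dx : α → F,
      (x ∈ M.E → v x = ∑ bb ∈ Bf, dx bb • v bb) ∧
      (x ∈ Bf → ∀ y, dx y = if y = x then 1 else 0) := by
    intro x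
    by_cases hxB : x ∈ Bf
    · refine ⟨fun y => if y = x then 1 else 0, fun _ => ?_, fun _ y => rfl⟩
      rw [show (∑ bb ∈ Bf, (if bb = x then (1:F) else 0) • v bb)
          = ∑ bb ∈ Bf, if bb = x then v bb else 0 from
        Finset.sum_congr rfl (fun bb _ => by split_ifs <;> simp)]
      rw [Finset.sum_ite_eq' Bf x (fun bb => v bb), if_pos hxB]
    · by_cases hxE : x ∈ M.E
      · have hdep : M.Dep ↑(insert x Bf) := by
          rw [Finset.coe_insert]
          exact hB.insert_dep ⟨hxE, fun h => hxB (Finset.mem_coe.mp h)⟩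
        obtain ⟨u', hout, huz, husum⟩ := aux_exists_normalized v hv Bf x hxB hBind hdep
        refine ⟨fun y => -u' y, fun _ => ?_, fun hc => absurd hc hxB⟩
        rw [Finset.sum_insert hxB, huz, one_smul] at husum
        have h1 : v x = -∑ bb ∈ Bf, u' bb • v bb := add_eq_zero_iff_eq_neg.mp husum
        rw [h1, ← Finset.sum_neg_distrib]
        exact Finset.sum_congr rfl (fun bb _ => by rw [neg_smul])
      · exact ⟨0, fun h => absurd h hxE, fun hc => absurd hc hxB⟩
  choose d hdv hdd using hdex
  set Xf : Finset α := (Bf.erase b1).erase b2 with hXfdef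
  have hb2e : b2 ∈ Bf.erase b1 := Finset.mem_erase.mpr ⟨fun h => hb12 h.symm, hb2⟩
  have hXfcard : Xf.card = rank M - 2 := by
    rw [hXfdef, Finset.card_erase_of_mem hb2e, Finset.card_erase_of_mem hb1, hBcard]
    omega
  have hXfB : Xf ⊆ Bf := (Finset.erase_subset _ _).trans (Finset.erase_subset _ _)
  have hBfSE : Bf ⊆ SE := by
    intro y hy
    rw [← Finset.mem_coe, hSEcoe]
    exact hBE (Finset.mem_coe.mpr hy)
  have hrn : rank M ≤ n := by
    have := Finset.card_le_card hBfSE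
    omega
  set S : Finset α := SE \ Xf with hSdef
  have hScard : S.card = n - rank M + 2 := by
    rw [hSdef, Finset.card_sdiff_of_subset (hXfB.trans hBfSE), hXfcard]
    omega
  set u : α → F := fun x => if x ∈ SE then d x b1 else 0 with hudef
  set w : α → F := fun x => if x ∈ SE then d x b2 else 0 with hwdef
  have hcount := aux_count q hq S u w (n - rank M) ?_
  · rw [hScard] at hcount
    have hk2q : n - rank M ≤ 2 * q := by
      rw [add_mul, add_mul, one_mul, mul_comm (n - rank M) q] at hcount
      have := Nat.le_of_add_le_add_left hcount
      omega
    rw [hncard]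
    omega
  -- the weight hypothesis
  intro a b hab
  set Z : Finset α := SE.filter (fun x => ¬ (a * u x + b * w x ≠ 0)) with hZdef
  have hZSE : Z ⊆ SE := Finset.filter_subset _ _
  have hZr : Z.card ≤ rank M := by
    apply aux_small_flat q hq v hv hpaving hrank Z
    · intro y hy
      rw [← hSEcoe]
      exact Finset.mem_coe.mpr (hZSE (Finset.mem_coe.mp hy))
    intro T hTZ hTcard
    have hTE : ↑T ⊆ M.E := by
      intro y hy
      rw [← hSEcoe]
      exact Finset.mem_coe.mpr (hZSE (hTZ (Finset.mem_coe.mp hy)))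
    rw [Matroid.dep_iff]
    refine ⟨?_, hTE⟩
    intro hTind
    have hlin := (hv ↑T hTE).mp hTind
    have hbound := aux_lin_bound v Bf b1 b2 hb1 hb2 hb12 a b hab T d
      (fun x hx => hdv x (hTE (Finset.mem_coe.mpr hx)))
      ?_ hlin
    · rw [hBcard] at hbound
      omega
    intro x hx
    have hxZ : x ∈ Z := hTZ hx
    have hxSE : x ∈ SE := hZSE hxZ
    have hgx := (Finset.mem_filter.mp hxZ).2
    rw [not_not] at hgx
    rw [hudef, hwdef] at hgx
    simp only [if_pos hxSE] at hgx
    exact hgx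
  have hsplit := Finset.card_filter_add_card_filter_not
    (s := SE) (p := fun x => a * u x + b * w x ≠ 0)
  have hfe : S.filter (fun x => a * u x + b * w x ≠ 0)
      = SE.filter (fun x => a * u x + b * w x ≠ 0) := by
    ext x
    simp only [Finset.mem_filter, hSdef, Finset.mem_sdiff]
    constructor
    · rintro ⟨⟨hxSE, _⟩, hgx⟩
      exact ⟨hxSE, hgx⟩
    · rintro ⟨hxSE, hgx⟩
      refine ⟨⟨hxSE, fun hxX => hgx ?_⟩, hgx⟩
      have hxB : x ∈ Bf := hXfB hxX
      have hx2 : x ≠ b2 := fun h => (Finset.mem_erase.mp hxX).1 h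
      have hx1 : x ≠ b1 := fun h => (Finset.mem_erase.mp (Finset.mem_erase.mp hxX).2).1 h
      have hux : u x = 0 := by
        rw [hudef]
        simp only [if_pos hxSE]
        rw [hdd x hxB b1, if_neg (fun h => hx1 h.symm)]
      have hwx : w x = 0 := by
        rw [hwdef]
        simp only [if_pos hxSE]
        rw [hdd x hxB b2, if_neg (fun h => hx2 h.symm)]
      rw [hux, hwx, mul_zero, mul_zero, add_zero]
  rw [hfe]
  rw [← hZdef] at hsplit
  omega

end LoosePaper
end

section
/- Let q be a prime power and let M be a simple GF(q)-representable matroid with no coloops that has two distinct loose elements e and f. Then r(M) ≤ 2q, or {e, f} is a cocircuit of M. -/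
namespace LoosePaper

open Set
open scoped Matroid

variable {α β : Type*}

/-! ### Auxiliary lemmas for Statement 4 -/

private lemma exists_circuit_subset_aux {α : Type*} (M : Matroid α) :
    ∀ (n : ℕ) (X : Set α), X.Finite → X.ncard ≤ n → M.Dep X → ∃ C, C ⊆ X ∧ Circuit M C := by
  intro n
  induction n with
  | zero =>
    intro X hfin hcard hdep
    rw [Nat.le_zero, Set.ncard_eq_zero hfin] at hcard
    exact absurd (hcard ▸ M.empty_indep) hdep.not_indep
  | succ n ih =>
    intro X hfin hcard hdep
    by_cases h : ∀ D, M.Dep D → D ⊆ X → D = X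
    · exact ⟨X, Set.Subset.rfl, hdep, h⟩
    · push_neg at h
      obtain ⟨D, hDdep, hDX, hne⟩ := h
      have hss : D ⊂ X := hDX.ssubset_of_ne hne
      have hlt : D.ncard < X.ncard := Set.ncard_lt_ncard hss hfin
      obtain ⟨C, hCD, hC⟩ := ih D (hfin.subset hDX) (by omega) hDdep
      exact ⟨C, hCD.trans hDX, hC⟩

private lemma exists_circuit_subset {α : Type*} {M : Matroid α} {X : Set α}
    (hX : M.Dep X) (hfin : X.Finite) : ∃ C, C ⊆ X ∧ Circuit M C :=
  exists_circuit_subset_aux M X.ncard X hfin le_rfl hX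

private lemma base_finite_ncard {α : Type*} {M : Matroid α} {B : Set α}
    (hB : M.IsBase B) (h0 : rank M ≠ 0) : B.Finite ∧ B.ncard = rank M := by
  have hset : {n | ∃ B', M.IsBase B' ∧ B'.ncard = n} = {B.ncard} := by
    apply Set.eq_singleton_iff_unique_mem.mpr
    exact ⟨⟨B, hB, rfl⟩, fun n ⟨B', hB', hn⟩ => hn ▸ hB'.ncard_eq_ncard_of_isBase hB⟩
  have hr : rank M = B.ncard := by rw [rank, hset, csInf_singleton]
  refine ⟨?_, hr.symm⟩
  by_contra hinf
  exact h0 (hr.trans (Set.Infinite.ncard hinf))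

private lemma no_small_span {α : Type*} {F : Type} [Field F] {M : Matroid α} {ι : Type}
    {v : α → ι → F}
    (hv : ∀ I, I ⊆ M.E → (M.Indep I ↔ LinearIndependent F (fun x : I => v x.1)))
    {T : Set α} (hT : M.Indep T) (hTfin : T.Finite) {g : α} (hg : Loose M g)
    (hgT : g ∉ T) (hspan : v g ∈ Submodule.span F (v '' T))
    (hsize : T.ncard + 1 < rank M) : False := by
  have hTE : T ⊆ M.E := hT.subset_ground
  have hgE : g ∈ M.E := hg.1
  have hdep : M.Dep (insert g T) := by
    rw [Matroid.dep_iff]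
    refine ⟨fun hind => ?_, Set.insert_subset hgE hTE⟩
    have hli := (hv _ (Set.insert_subset hgE hTE)).mp hind
    exact ((linearIndepOn_insert (f := v) hgT).mp hli).2 hspan
  obtain ⟨C, hCsub, hC⟩ := exists_circuit_subset hdep (hTfin.insert g)
  have hgC : g ∈ C := by
    by_contra hgC
    have hCT : C ⊆ T := fun x hx => ((hCsub hx).resolve_left (fun h => hgC (h ▸ hx)))
    exact hC.1.not_indep (hT.subset hCT)
  have h1 := hg.2 C hC hgC
  have hle : C.ncard ≤ T.ncard + 1 :=
    le_trans (Set.ncard_le_ncard hCsub (hTfin.insert g)) (Set.ncard_insert_le g T)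
  omega

private lemma key_count {α : Type*} {q : ℕ} {F : Type} [Field F] [Fintype F]
    (hq : Fintype.card F = q) {M : Matroid α} {ι : Type} {v : α → ι → F}
    (hv : ∀ I, I ⊆ M.E → (M.Indep I ↔ LinearIndependent F (fun x : I => v x.1)))
    {e f : α} (hef : e ≠ f) (he : Loose M e) (hf : Loose M f)
    {B : Set α} (hB : M.IsBase B) (heB : e ∉ B) (hfB : f ∉ B)
    (hr : 2 * q < rank M) : False := by
  classical
  have hq1 : 1 ≤ q := hq ▸ Fintype.card_pos
  have h0 : rank M ≠ 0 := by omega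
  obtain ⟨hBfin, hBcard⟩ := base_finite_ncard hB h0
  set r := rank M with hrdef
  have hr3 : 3 ≤ r := by omega
  have hBE : B ⊆ M.E := hB.subset_ground
  have heE := he.1
  have hfE := hf.1
  have hBli : LinearIndependent F (fun x : B => v x.1) := (hv B hBE).mp hB.indep
  have hspan : ∀ g : α, g ∈ M.E → g ∉ B →
      v g ∈ Submodule.span F (Set.range (fun x : B => v x.1)) := by
    intro g hgE hgB
    have hdep := hB.insert_dep ⟨hgE, hgB⟩
    have hnl : ¬ LinearIndependent F (fun x : ↥(insert g B) => v x.1) :=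
      fun h => hdep.not_indep ((hv _ (Set.insert_subset hgE hBE)).mpr h)
    rw [← Set.image_eq_range]
    by_contra hc
    exact hnl ((linearIndepOn_insert (f := v) hgB).mpr ⟨hBli, hc⟩)
  have heSpan := hspan e heE heB
  have hfSpan := hspan f hfE hfB
  haveI : Fintype ↥B := hBfin.fintype
  let bas : Module.Basis ↥B F _ := Module.Basis.span hBli
  set a : ↥B → F := fun b => bas.repr ⟨v e, heSpan⟩ b with ha
  set c : ↥B → F := fun b => bas.repr ⟨v f, hfSpan⟩ b with hc
  have hsum : ∀ (w : ι → F) (hw : w ∈ Submodule.span F (Set.range (fun x : B => v x.1))),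
      ∑ b : ↥B, (bas.repr ⟨w, hw⟩ b) • v b.1 = w := by
    intro w hw
    have h1 := bas.sum_repr ⟨w, hw⟩
    have h2 : ((∑ b : ↥B, bas.repr ⟨w, hw⟩ b • bas b :
        Submodule.span F (Set.range (fun x : B => v x.1))) : ι → F) = w :=
      congrArg Subtype.val h1
    rw [AddSubmonoidClass.coe_finset_sum] at h2
    refine Eq.trans (Finset.sum_congr rfl fun b _ => ?_) h2
    rw [SetLike.val_smul]
    congr 1
    exact congrArg Subtype.val (Module.Basis.span_apply hBli b).symm
  have hesum : ∑ b : ↥B, a b • v b.1 = v e := hsum _ heSpan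
  have hfsum : ∑ b : ↥B, c b • v b.1 = v f := hsum _ hfSpan
  -- generic removal step
  have hstep : ∀ (g : α), Loose M g → g ∉ B →
      ∀ (K : Set α), K ⊆ B → (B \ K).ncard + 1 < r →
      v g ∈ Submodule.span F (v '' (B \ K)) → False := by
    intro g hg hgB K hKB hsize hsp
    exact no_small_span hv (hB.indep.subset Set.diff_subset) hBfin.diff
      hg (fun h => hgB h.1) hsp hsize
  -- at most one zero coefficient
  have hzero : ∀ (a' : ↥B → F) (g : α), Loose M g → g ∉ B →
      (∑ b : ↥B, a' b • v b.1 = v g) →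
      ∀ b1 b2 : ↥B, b1 ≠ b2 → a' b1 = 0 → a' b2 = 0 → False := by
    intro a' g hg hgB hsumg b1 b2 hne h1 h2
    set K : Set α := {b1.1, b2.1} with hK
    have hKB : K ⊆ B := Set.pair_subset b1.2 b2.2
    have hsp : v g ∈ Submodule.span F (v '' (B \ K)) := by
      rw [← hsumg]
      refine Submodule.sum_mem _ fun b _ => ?_
      by_cases hbK : (b : α) ∈ K
      · have hz : a' b = 0 := by
          simp only [hK, Set.mem_insert_iff, Set.mem_singleton_iff] at hbK
          rcases hbK with h | h
          · rw [Subtype.ext h, h1]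
          · rw [Subtype.ext h, h2]
        rw [hz, zero_smul]
        exact Submodule.zero_mem _
      · exact Submodule.smul_mem _ _ (Submodule.subset_span ⟨b.1, ⟨b.2, hbK⟩, rfl⟩)
    have hKcard : K.ncard = 2 := Set.ncard_pair (fun h => hne (Subtype.ext h))
    have hsize : (B \ K).ncard + 1 < r := by
      rw [Set.ncard_diff hKB (Set.toFinite K), hKcard, hBcard]
      omega
    exact hstep g hg hgB K hKB hsize hsp
  -- at most two coefficients with a given nonzero ratio
  have htriple : ∀ (lam : F), ∀ b1 b2 b3 : ↥B, b1 ≠ b2 → b1 ≠ b3 → b2 ≠ b3 →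
      a b1 = lam * c b1 → a b2 = lam * c b2 → a b3 = lam * c b3 → False := by
    intro lam b1 b2 b3 h12 h13 h23 e1 e2 e3
    set K : Set α := {b1.1, b2.1, b3.1} with hK
    have hKB : K ⊆ B := Set.insert_subset b1.2 (Set.pair_subset b2.2 b3.2)
    have hKfin : K.Finite := Set.toFinite K
    have hdiff : ∑ b : ↥B, (a b - lam * c b) • v b.1 = v e - lam • v f := by
      have hh : ∑ b : ↥B, (a b - lam * c b) • v b.1
          = (∑ b : ↥B, a b • v b.1) - lam • ∑ b : ↥B, c b • v b.1 := by
        rw [Finset.smul_sum, ← Finset.sum_sub_distrib]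
        exact Finset.sum_congr rfl fun b _ => by rw [sub_smul, mul_smul]
      rw [hh, hesum, hfsum]
    set T : Set α := insert f (B \ K) with hT
    have hTE : T ⊆ M.E := Set.insert_subset hfE (Set.diff_subset.trans hBE)
    have hTfin : T.Finite := hBfin.diff.insert f
    have hsubspan : v e ∈ Submodule.span F (v '' T) := by
      have hmem1 : v f ∈ Submodule.span F (v '' T) :=
        Submodule.subset_span ⟨f, Set.mem_insert _ _, rfl⟩
      have hmem2 : v e - lam • v f ∈ Submodule.span F (v '' T) := by
        rw [← hdiff]
        refine Submodule.sum_mem _ fun b _ => ?_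
        by_cases hbK : (b : α) ∈ K
        · have hz : a b - lam * c b = 0 := by
            simp only [hK, Set.mem_insert_iff, Set.mem_singleton_iff] at hbK
            rcases hbK with h | h | h
            · rw [Subtype.ext h, e1, sub_self]
            · rw [Subtype.ext h, e2, sub_self]
            · rw [Subtype.ext h, e3, sub_self]
          rw [hz, zero_smul]
          exact Submodule.zero_mem _
        · exact Submodule.smul_mem _ _
            (Submodule.subset_span ⟨b.1, Set.mem_insert_of_mem _ ⟨b.2, hbK⟩, rfl⟩)
      have hadd := Submodule.add_mem _ hmem2 (Submodule.smul_mem _ lam hmem1)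
      rwa [sub_add_cancel] at hadd
    have hKcard : K.ncard = 3 := by
      rw [Set.ncard_eq_three]
      exact ⟨b1.1, b2.1, b3.1, fun h => h12 (Subtype.ext h), fun h => h13 (Subtype.ext h),
        fun h => h23 (Subtype.ext h), rfl⟩
    have hTcard : T.ncard + 1 < r := by
      have h1 : (B \ K).ncard = r - 3 := by
        rw [Set.ncard_diff hKB hKfin, hKcard, hBcard]
      have h2 : T.ncard ≤ (B \ K).ncard + 1 := Set.ncard_insert_le f _
      omega
    have heT : e ∉ T := by
      intro h
      rcases h with h | h
      · exact hef h
      · exact heB h.1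
    by_cases hTind : M.Indep T
    · exact no_small_span hv hTind hTfin he heT hsubspan hTcard
    · have hTdep : M.Dep T := ⟨hTind, hTE⟩
      obtain ⟨C, hCsub, hC⟩ := exists_circuit_subset hTdep hTfin
      have hfC : f ∈ C := by
        by_contra hfC
        have hCT : C ⊆ B \ K := fun x hx => ((hCsub hx).resolve_left (fun h => hfC (h ▸ hx)))
        exact hC.1.not_indep (hB.indep.subset (hCT.trans Set.diff_subset))
      have hge := hf.2 C hC hfC
      have hle : C.ncard ≤ T.ncard := Set.ncard_le_ncard hCsub hTfin
      omega
  -- fiber counting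
  have hcardB : Fintype.card ↥B = r := by
    have h1 := Nat.card_coe_set_eq B
    rw [Nat.card_eq_fintype_card] at h1
    rw [h1, hBcard]
  set φ : ↥B → Option F := fun b => if c b = 0 then none else some (a b * (c b)⁻¹) with hφ
  have hfib : (Finset.univ : Finset ↥B).card
      = ∑ y : Option F, (Finset.univ.filter (fun b => φ b = y)).card :=
    Finset.card_eq_sum_card_fiberwise (fun x _ => Finset.mem_univ _)
  set g : Option F → ℕ := fun y => y.elim 1 (fun μ => if μ = 0 then 1 else 2) with hg
  have hbound : ∀ y : Option F, (Finset.univ.filter (fun b => φ b = y)).card ≤ g y := by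
    intro y
    match y with
    | none =>
      refine Finset.card_le_one.mpr fun b1 hb1 b2 hb2 => ?_
      rw [Finset.mem_filter] at hb1 hb2
      have hc1 : c b1 = 0 := by
        by_contra h; simp only [hφ, if_neg h] at hb1; exact Option.some_ne_none _ hb1.2
      have hc2 : c b2 = 0 := by
        by_contra h; simp only [hφ, if_neg h] at hb2; exact Option.some_ne_none _ hb2.2
      by_contra hne
      exact hzero c f hf hfB hfsum b1 b2 hne hc1 hc2
    | some μ =>
      by_cases hμ : μ = 0
      · subst hμ
        refine le_trans (Finset.card_le_one.mpr fun b1 hb1 b2 hb2 => ?_) (by simp [hg])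
        rw [Finset.mem_filter] at hb1 hb2
        have ha1 : a b1 = 0 := by
          by_cases h : c b1 = 0
          · simp only [hφ, if_pos h] at hb1; exact (Option.some_ne_none _ hb1.2.symm).elim
          · simp only [hφ, if_neg h, Option.some.injEq] at hb1
            have := hb1.2
            field_simp at this
            simpa using this
        have ha2 : a b2 = 0 := by
          by_cases h : c b2 = 0
          · simp only [hφ, if_pos h] at hb2; exact (Option.some_ne_none _ hb2.2.symm).elim
          · simp only [hφ, if_neg h, Option.some.injEq] at hb2
            have := hb2.2
            field_simp at this
            simpa using this
        by_contra hne
        exact hzero a e he heB hesum b1 b2 hne ha1 ha2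
      · have hle2 : (Finset.univ.filter (fun b => φ b = some μ)).card ≤ 2 := by
          by_contra hgt
          push_neg at hgt
          obtain ⟨b1, hb1, b2, hb2, b3, hb3, h12, h13, h23⟩ := Finset.two_lt_card.mp hgt
          have hrat : ∀ b : ↥B, φ b = some μ → a b = μ * c b := by
            intro b hb
            by_cases h : c b = 0
            · simp only [hφ, if_pos h] at hb; exact (Option.some_ne_none _ hb.symm).elim
            · simp only [hφ, if_neg h, Option.some.injEq] at hb
              field_simp at hb
              rw [hb, mul_comm]
          rw [Finset.mem_filter] at hb1 hb2 hb3
          exact htriple μ b1 b2 b3 h12 h13 h23 (hrat b1 hb1.2) (hrat b2 hb2.2) (hrat b3 hb3.2)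
        calc (Finset.univ.filter (fun b => φ b = some μ)).card ≤ 2 := hle2
          _ = g (some μ) := by simp [hg, hμ]
  have hsumle : ∑ y : Option F, (Finset.univ.filter (fun b => φ b = y)).card
      ≤ ∑ y : Option F, g y := Finset.sum_le_sum fun y _ => hbound y
  have hgsum : ∑ y : Option F, g y = 2 * q := by
    rw [univ_option, Finset.sum_insertNone]
    have h2 : ∑ μ : F, g (some μ) = 1 + 2 * (q - 1) := by
      have h0u : (0 : F) ∈ Finset.univ := Finset.mem_univ _
      rw [← Finset.add_sum_erase _ _ h0u]
      have hrw : ∑ μ ∈ Finset.univ.erase (0 : F), g (some μ)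
          = ∑ _μ ∈ Finset.univ.erase (0 : F), 2 := by
        refine Finset.sum_congr rfl fun μ hμ => ?_
        have := Finset.ne_of_mem_erase hμ
        simp [hg, this]
      rw [hrw, Finset.sum_const, Finset.card_erase_of_mem h0u, Finset.card_univ, hq]
      simp [hg]
      ring
    rw [h2]
    simp only [hg, Option.elim]
    omega
  rw [Finset.card_univ, hcardB] at hfib
  omega

/-- Theorem 1.4: if a simple `GF(q)`-representable matroid with no
coloops has two distinct loose elements `e` and `f`, then `r(M) ≤ 2q` or `{e, f}`
is a cocircuit of `M`. -/
theorem two_loose_elements {α : Type*} (q : ℕ) (F : Type) [Field F] [Fintype F]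
    (hq : Fintype.card F = q) (M : Matroid α) (hsimple : Simple M)
    (hrep : Representable M F) (hcoloops : NoColoops M)
    (e f : α) (hef : e ≠ f) (he : Loose M e) (hf : Loose M f) :
    rank M ≤ 2 * q ∨ Circuit M.dual {e, f} := by
  classical
  by_cases hr : rank M ≤ 2 * q
  · exact Or.inl hr
  push_neg at hr
  right
  obtain ⟨ι, v, hv⟩ := hrep
  have hkey : ∀ B, M.IsBase B → ¬ Disjoint ({e, f} : Set α) B := by
    intro B hB hdisj
    have heB : e ∉ B := Set.disjoint_left.mp hdisj (Set.mem_insert _ _)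
    have hfB : f ∉ B := Set.disjoint_left.mp hdisj (Set.mem_insert_of_mem _ rfl)
    exact key_count hq hv hef he hf hB heB hfB hr
  have hsingle : ∀ x, x ∈ M.E → ¬ M✶.Dep {x} := by
    intro x hxE hD
    apply hcoloops x
    refine ⟨hxE, fun B hB => ?_⟩
    by_contra hxB
    have hind : M✶.Indep {x} := Matroid.dual_indep_iff_exists'.mpr
      ⟨Set.singleton_subset_iff.mpr hxE, B, hB, Set.disjoint_singleton_left.mpr hxB⟩
    exact hD.not_indep hind
  refine ⟨?_, ?_⟩
  · rw [Matroid.dep_iff]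
    refine ⟨fun hind => ?_, ?_⟩
    · obtain ⟨-, B, hB, hdisj⟩ := Matroid.dual_indep_iff_exists'.mp hind
      exact hkey B hB hdisj
    · rw [Matroid.dual_ground]
      exact Set.insert_subset he.1 (Set.singleton_subset_iff.mpr hf.1)
  · intro D hD hsub
    by_cases heD : e ∈ D <;> by_cases hfD : f ∈ D
    · exact Set.Subset.antisymm hsub
        (Set.insert_subset heD (Set.singleton_subset_iff.mpr hfD))
    · exfalso
      have hDe : D = {e} := by
        refine Set.Subset.antisymm (fun x hx => ?_) (Set.singleton_subset_iff.mpr heD)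
        rcases hsub hx with rfl | rfl
        · rfl
        · exact absurd hx hfD
      exact hsingle e he.1 (hDe ▸ hD)
    · exfalso
      have hDf : D = {f} := by
        refine Set.Subset.antisymm (fun x hx => ?_) (Set.singleton_subset_iff.mpr hfD)
        rcases hsub hx with rfl | rfl
        · exact absurd hx heD
        · rfl
      exact hsingle f hf.1 (hDf ▸ hD)
    · exfalso
      obtain ⟨x, hx⟩ := hD.nonempty
      rcases hsub hx with rfl | rfl
      · exact heD hx
      · exact hfD hx

end LoosePaper
end

section
/- Let M be a simple binary matroid with no coloops and rank at least two, and let e be a free element of M. Then M is a circuit (its ground set is a circuit). -/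
namespace LoosePaper

open Set
open scoped Matroid

variable {α β : Type*}

open scoped symmDiff

private lemma sum_symmDiff_char_two {γ V : Type*} [AddCommGroup V]
    (h2 : ∀ x : V, x + x = 0) [DecidableEq γ] (A B : Finset γ) (g : γ → V) :
    ∑ x ∈ A ∆ B, g x = (∑ x ∈ A, g x) + ∑ x ∈ B, g x := by
  rw [symmDiff_def, Finset.sup_eq_union,
    Finset.sum_union disjoint_sdiff_sdiff]
  have h1 := Finset.sum_inter_add_sum_sdiff A B g
  have h2' := Finset.sum_inter_add_sum_sdiff B A g
  rw [Finset.inter_comm] at h2'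
  have key : (∑ x ∈ A \ B, g x) + ∑ x ∈ B \ A, g x
      = ((∑ x ∈ A, g x) + ∑ x ∈ B, g x)
        - ((∑ x ∈ A ∩ B, g x) + ∑ x ∈ A ∩ B, g x) := by
    rw [← h1, ← h2']; abel
  rw [key, h2 _, sub_zero]

private lemma finset_eq_empty_of_indep_sum {α ι : Type*} {I : Set α}
    (v : α → ι → ZMod 2)
    (hli : LinearIndependent (ZMod 2) (fun x : I => v x.1))
    (T : Finset α) (hTI : ↑T ⊆ I) (hsum : ∑ x ∈ T, v x = 0) : T = ∅ := by
  by_contra hne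
  obtain ⟨a, ha⟩ := Finset.nonempty_of_ne_empty hne
  set l : α →₀ ZMod 2 := Finsupp.indicator T (fun _ _ => 1) with hl
  have hsuppT : l ∈ Finsupp.supported (ZMod 2) (ZMod 2) (↑T : Set α) :=
    (Finsupp.mem_supported _ _).mpr (Finsupp.support_indicator_subset _ _)
  have hsupp : l ∈ Finsupp.supported (ZMod 2) (ZMod 2) I :=
    (Finsupp.mem_supported _ _).mpr (((Finsupp.mem_supported _ _).mp hsuppT).trans hTI)
  have hcomb : Finsupp.linearCombination (ZMod 2) v l = 0 := by
    rw [Finsupp.linearCombination_apply_of_mem_supported (ZMod 2) hsuppT]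
    rw [← hsum]
    refine Finset.sum_congr rfl fun x hx => ?_
    rw [hl, Finsupp.indicator_of_mem hx, one_smul]
  have hl0 : l = 0 := (linearIndepOn_iff (v := v) (s := I)).mp hli l hsupp hcomb
  have : l a = 0 := by rw [hl0]; rfl
  rw [hl, Finsupp.indicator_of_mem ha] at this
  exact one_ne_zero this

private lemma circuit_sum_zero {α ι : Type*} {C : Set α} (v : α → ι → ZMod 2)
    (hdep : ¬ LinearIndependent (ZMod 2) (fun x : C => v x.1))
    (hmin : ∀ x ∈ C, LinearIndependent (ZMod 2) (fun y : ↥(C \ {x}) => v y.1))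
    (hfin : C.Finite) : ∑ x ∈ hfin.toFinset, v x = 0 := by
  obtain ⟨f, hsupp, hcomb, hf0⟩ := (linearDepOn_iff (v := v) (s := C)).mp hdep
  have hsub : ↑f.support ⊆ C := (Finsupp.mem_supported _ _).mp hsupp
  have hCsub : C ⊆ ↑f.support := by
    intro x0 hx0
    by_contra hx0s
    have hsupp' : f ∈ Finsupp.supported (ZMod 2) (ZMod 2) (C \ {x0}) := by
      rw [Finsupp.mem_supported]
      intro y hy
      exact ⟨hsub hy, fun h => hx0s (by
        rw [Set.mem_singleton_iff] at h; exact h ▸ hy)⟩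
    have hcomb' : Finsupp.linearCombination (ZMod 2) v f = 0 := by
      rw [Finsupp.linearCombination_apply, Finsupp.sum]; exact hcomb
    exact hf0 ((linearIndepOn_iff (v := v)).mp (hmin x0 hx0) f hsupp' hcomb')
  have hsuppC : f.support = hfin.toFinset := by
    apply Finset.coe_injective
    rw [Set.Finite.coe_toFinset]
    exact hsub.antisymm hCsub
  have hone : ∀ x ∈ f.support, f x = 1 := by
    intro x hx
    have hne := Finsupp.mem_support_iff.mp hx
    revert hne
    generalize f x = a
    revert a; decide
  calc ∑ x ∈ hfin.toFinset, v x = ∑ x ∈ f.support, f x • v x := by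
        rw [← hsuppC]
        exact (Finset.sum_congr rfl fun x hx => by rw [hone x hx, one_smul]).symm
    _ = 0 := hcomb

private lemma exists_circuit_aux {α : Type*} {M : Matroid α} :
    ∀ n (D : Set α), D.Finite → D.ncard ≤ n → M.Dep D → ∃ C, C ⊆ D ∧ Circuit M C := by
  intro n
  induction n with
  | zero =>
    intro D hfin hcard hdep
    rw [Nat.le_zero, Set.ncard_eq_zero hfin] at hcard
    exact absurd (hcard ▸ hdep).not_indep (not_not.mpr M.empty_indep)
  | succ n ih =>
    intro D hfin hcard hdep
    by_cases h : ∀ D', M.Dep D' → D' ⊆ D → D' = D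
    · exact ⟨D, subset_rfl, hdep, h⟩
    · push_neg at h
      obtain ⟨D', hD'dep, hD'sub, hne⟩ := h
      obtain ⟨C, hCD', hC⟩ := ih D' (hfin.subset hD'sub)
        (by have := Set.ncard_lt_ncard (hD'sub.ssubset_of_ne hne) hfin; omega) hD'dep
      exact ⟨C, hCD'.trans hD'sub, hC⟩

/-- Proposition 2.1(i): a simple binary matroid with no coloops
and rank at least two that has a free element is a circuit. -/
theorem binary_free_element {α : Type*} (M : Matroid α) (hsimple : Simple M)
    (hbinary : Representable M (ZMod 2)) (hcoloops : NoColoops M)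
    (hrank : 2 ≤ rank M) (e : α) (hfree : FreeElt M e) :
    Circuit M M.E := by
  classical
  obtain ⟨he, hfreeC⟩ := hfree
  -- rank facts
  have hrset : rank M ∈ {n | ∃ B, M.IsBase B ∧ B.ncard = n} := by
    apply Nat.sInf_mem
    obtain ⟨B, hB⟩ := M.exists_isBase
    exact ⟨B.ncard, B, hB, rfl⟩
  obtain ⟨B0, hB0, hB0card⟩ := hrset
  have hB0fin : B0.Finite := by
    by_contra hinf
    rw [Set.Infinite.ncard hinf] at hB0card
    omega
  have hbasefin : ∀ B, M.IsBase B → B.Finite := fun B hB => hB0.finite_of_finite hB0fin hB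
  have hbasecard : ∀ B, M.IsBase B → B.ncard = rank M := fun B hB =>
    (hB.ncard_eq_ncard_of_isBase hB0).trans hB0card
  have hindfin : ∀ I, M.Indep I → I.Finite := by
    intro I hI
    obtain ⟨B, hB, hIB⟩ := hI.exists_isBase_superset
    exact (hbasefin B hB).subset hIB
  obtain ⟨ι, v, hv⟩ := hbinary
  have hvI : ∀ I, M.Indep I → LinearIndependent (ZMod 2) (fun x : I => v x.1) :=
    fun I hI => (hv I hI.subset_ground).mp hI
  -- circuit basics
  have hdiff : ∀ C x, Circuit M C → x ∈ C → M.Indep (C \ {x}) := by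
    intro C x hC hx
    by_contra hnot
    have hdep : M.Dep (C \ {x}) := ⟨hnot, Set.diff_subset.trans hC.1.subset_ground⟩
    have heq := hC.2 _ hdep Set.diff_subset
    rw [← heq] at hx
    exact hx.2 rfl
  have hcfin : ∀ C, Circuit M C → C.Finite := by
    intro C hC
    obtain ⟨x, hx⟩ := hC.1.nonempty
    have hCi : C = insert x (C \ {x}) := by
      rw [Set.insert_diff_singleton, Set.insert_eq_self.mpr hx]
    rw [hCi]
    exact ((hindfin _ (hdiff C x hC hx)).insert x)
  have hcsum : ∀ C (hC : Circuit M C), ∑ x ∈ (hcfin C hC).toFinset, v x = 0 := by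
    intro C hC
    refine circuit_sum_zero v ?_ ?_ (hcfin C hC)
    · exact fun h => hC.1.not_indep ((hv C hC.1.subset_ground).mpr h)
    · intro x hx
      exact (hv _ (Set.diff_subset.trans hC.1.subset_ground)).mp (hdiff C x hC hx)
  -- spanning circuits through e give bases
  have hbase : ∀ C, Circuit M C → e ∈ C → M.IsBase (C \ {e}) := by
    intro C hC heC
    have hind := hdiff C e hC heC
    refine Matroid.isBase_iff_indep_closure_eq.mpr ⟨hind, ?_⟩
    have h1 : C ⊆ M.closure (C \ {e}) := by
      intro x hx
      rcases eq_or_ne x e with rfl | hne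
      · rw [hind.mem_closure_iff_of_notMem (fun h => h.2 rfl)]
        rw [Set.insert_diff_singleton, Set.insert_eq_self.mpr heC]
        exact hC.1
      · exact M.subset_closure _ (Set.diff_subset.trans hC.1.subset_ground) ⟨hx, hne⟩
    refine subset_antisymm (M.closure_subset_ground _) ?_
    rw [← hfreeC C hC heC]
    exact M.closure_subset_closure_of_subset_closure h1
  have hcardC : ∀ C, Circuit M C → e ∈ C → C.ncard = rank M + 1 := by
    intro C hC heC
    have hb := hbase C hC heC
    have hfinD := hbasefin _ hb
    have hCi : C = insert e (C \ {e}) := by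
      rw [Set.insert_diff_singleton, Set.insert_eq_self.mpr heC]
    rw [hCi, Set.ncard_insert_of_notMem (fun h => h.2 rfl) hfinD, hbasecard _ hb]
  -- dependent finite sets contain circuits
  have hdc : ∀ D, M.Dep D → D.Finite → ∃ C, C ⊆ D ∧ Circuit M C :=
    fun D hD hfin => exists_circuit_aux D.ncard D hfin le_rfl hD
  -- a base avoiding e
  have hex : ∃ B, M.IsBase B ∧ e ∉ B := by
    by_contra hcon
    push_neg at hcon
    exact hcoloops e ⟨he, fun B hB => hcon B hB⟩
  obtain ⟨B, hB, heB⟩ := hex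
  have hBfin := hbasefin B hB
  have hdepeB : M.Dep (insert e B) := by
    rw [hB.indep.insert_dep_iff]
    exact ⟨by rw [hB.closure_eq]; exact he, heB⟩
  obtain ⟨C, hCsub, hC⟩ := hdc _ hdepeB (hBfin.insert e)
  have heC : e ∈ C := by
    by_contra heC
    exact hC.1.not_indep (hB.indep.subset
      (fun x hx => (Set.mem_insert_iff.mp (hCsub hx)).resolve_left
        (fun h => heC (h ▸ hx))))
  have hB' := hbase C hC heC
  have hCfin := hcfin C hC
  have hCcard := hcardC C hC heC
  have hCE := hC.1.subset_ground
  -- characteristic two fact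
  have h2 : ∀ x : ι → ZMod 2, x + x = 0 := by
    intro x; funext i
    have hz : ∀ a : ZMod 2, a + a = 0 := by decide
    exact hz _
  have hsingle : ∀ g ∈ M.E, M.Indep {g} := by
    intro g hg
    have := hsimple g hg g hg
    rwa [Set.pair_eq_singleton] at this
  -- main claim: M.E ⊆ C
  have hEC : M.E ⊆ C := by
    intro f hf
    by_contra hfC
    have hfB' : f ∉ C \ {e} := fun h => hfC h.1
    have hdepf : M.Dep (insert f (C \ {e})) := by
      rw [hB'.indep.insert_dep_iff]
      exact ⟨by rw [hB'.closure_eq]; exact hf, hfB'⟩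
    have hB'fin := hbasefin _ hB'
    obtain ⟨Cf, hCfsub, hCf⟩ := hdc _ hdepf (hB'fin.insert f)
    have hfCf : f ∈ Cf := by
      by_contra hfCf
      exact hCf.1.not_indep (hB'.indep.subset
        (fun x hx => (Set.mem_insert_iff.mp (hCfsub hx)).resolve_left
          (fun h => hfCf (h ▸ hx))))
    have hCffin := hcfin Cf hCf
    have hCfE := hCf.1.subset_ground
    have hCfdiff : Cf \ {f} ⊆ C \ {e} := by
      intro x hx
      exact (Set.mem_insert_iff.mp (hCfsub hx.1)).resolve_left
        (fun h => hx.2 (by rw [Set.mem_singleton_iff]; exact h))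
    have hCfdiffC : Cf \ {f} ⊆ C := hCfdiff.trans Set.diff_subset
    -- |Cf| ≥ 3 by simplicity
    have hCf3 : 3 ≤ Cf.ncard := by
      obtain ⟨a, ha⟩ := hCf.1.nonempty
      have h1 : ¬ Cf ⊆ {a} := fun hsub =>
        hCf.1.not_indep ((hsingle a (hCfE ha)).subset hsub)
      obtain ⟨b, hb, hba⟩ := Set.not_subset.mp h1
      have h2' : ¬ Cf ⊆ {a, b} := fun hsub =>
        hCf.1.not_indep ((hsimple a (hCfE ha) b (hCfE hb)).subset hsub)
      obtain ⟨c, hcm, hcab⟩ := Set.not_subset.mp h2'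
      have hab : a ≠ b := fun h => hba (by rw [← h]; exact rfl)
      have hac : a ≠ c := fun h => hcab (by rw [← h]; exact Set.mem_insert a {b})
      have hbc : b ≠ c := fun h => hcab (by rw [← h]; exact Set.mem_insert_of_mem a rfl)
      have h3 : ({a, b, c} : Set α).ncard = 3 :=
        Set.ncard_eq_three.mpr ⟨a, b, c, hab, hac, hbc, rfl⟩
      have hsub3 : ({a, b, c} : Set α) ⊆ Cf :=
        Set.insert_subset ha (Set.insert_subset hb (Set.singleton_subset_iff.mpr hcm))
      calc 3 = ({a, b, c} : Set α).ncard := h3.symm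
        _ ≤ Cf.ncard := Set.ncard_le_ncard hsub3 hCffin
    -- the symmetric difference of C and Cf
    have hCfC : Cf \ C = {f} := by
      apply subset_antisymm
      · intro x hx
        rw [Set.mem_singleton_iff]
        by_contra hxf
        exact hx.2 (hCfdiffC ⟨hx.1, fun h => hxf (Set.mem_singleton_iff.mp h)⟩)
      · intro x hx
        rw [Set.mem_singleton_iff] at hx
        subst hx
        exact ⟨hfCf, hfC⟩
    have hSfin : ((C \ Cf) ∪ {f} : Set α).Finite :=
      (hCfin.diff (t := Cf)).union (Set.finite_singleton f)
    have hsymm : ((hCfin.toFinset ∆ hCffin.toFinset : Finset α) : Set α)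
        = (C \ Cf) ∪ {f} := by
      rw [Finset.coe_symmDiff, Set.Finite.coe_toFinset, Set.Finite.coe_toFinset,
        Set.symmDiff_def, hCfC]
    have hsum : ∑ x ∈ (hCfin.toFinset ∆ hCffin.toFinset), v x = 0 := by
      rw [sum_symmDiff_char_two h2, hcsum C hC, hcsum Cf hCf, add_zero]
    have hSE : ((C \ Cf) ∪ {f} : Set α) ⊆ M.E :=
      Set.union_subset (Set.diff_subset.trans hCE) (Set.singleton_subset_iff.mpr hf)
    have hSdep : M.Dep ((C \ Cf) ∪ {f}) := by
      refine ⟨fun hSind => ?_, hSE⟩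
      have hTe := finset_eq_empty_of_indep_sum v (hvI _ hSind)
        (hCfin.toFinset ∆ hCffin.toFinset) (by rw [hsymm]) hsum
      have hfmem : f ∈ (hCfin.toFinset ∆ hCffin.toFinset : Finset α) := by
        have hfS : f ∈ ((C \ Cf) ∪ {f} : Set α) := Set.mem_union_right _ rfl
        rw [← hsymm] at hfS
        exact_mod_cast hfS
      rw [hTe] at hfmem
      exact Finset.notMem_empty f hfmem
    obtain ⟨C', hC'S, hC'⟩ := hdc _ hSdep hSfin
    by_cases heC' : e ∈ C'
    · -- cardinality contradiction
      have hcard' := hcardC C' hC' heC'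
      have hle : C'.ncard ≤ ((C \ Cf) ∪ {f} : Set α).ncard :=
        Set.ncard_le_ncard hC'S hSfin
      have hCfd : (Cf \ {f}).ncard = Cf.ncard - 1 := by
        rw [Set.ncard_diff (Set.singleton_subset_iff.mpr hfCf) (Set.finite_singleton f),
          Set.ncard_singleton]
      have hrw : C \ Cf = C \ (Cf \ {f}) := by
        ext x
        constructor
        · exact fun hx => ⟨hx.1, fun h => hx.2 h.1⟩
        · rintro ⟨hx1, hx2⟩
          refine ⟨hx1, fun hxCf => hx2 ⟨hxCf, fun h => ?_⟩⟩
          rw [Set.mem_singleton_iff] at h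
          exact hfC (h ▸ hx1)
      have hCdiff : (C \ Cf).ncard = C.ncard - (Cf.ncard - 1) := by
        rw [hrw, Set.ncard_diff hCfdiffC (hCffin.subset Set.diff_subset), hCfd]
      have h5 := Set.ncard_union_le (C \ Cf) ({f} : Set α)
      rw [Set.ncard_singleton] at h5
      omega
    · -- e ∉ C' : then C' = Cf, contradiction
      have hfC' : f ∈ C' := by
        by_contra hfC'
        have hC'C : C' ⊆ C := by
          intro x hx
          rcases hC'S hx with h | h
          · exact h.1
          · exact absurd (Set.mem_singleton_iff.mp h ▸ hx) hfC'
        have heq := hC.2 C' hC'.1 hC'C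
        exact heC' (heq ▸ heC)
      have hC'fin := hcfin C' hC'
      have hTsub : ((hC'fin.toFinset ∆ hCffin.toFinset : Finset α) : Set α) ⊆ C \ {e} := by
        rw [Finset.coe_symmDiff, Set.Finite.coe_toFinset, Set.Finite.coe_toFinset,
          Set.symmDiff_def]
        rintro x (⟨hx1, hx2⟩ | ⟨hx1, hx2⟩)
        · rcases hC'S hx1 with h | h
          · exact ⟨h.1, fun hxe => heC' (Set.mem_singleton_iff.mp hxe ▸ hx1)⟩
          · exact absurd (Set.mem_singleton_iff.mp h ▸ hfCf) hx2
        · exact hCfdiff ⟨hx1, fun h => hx2 (Set.mem_singleton_iff.mp h ▸ hfC')⟩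
      have hsum2 : ∑ x ∈ (hC'fin.toFinset ∆ hCffin.toFinset), v x = 0 := by
        rw [sum_symmDiff_char_two h2, hcsum C' hC', hcsum Cf hCf, add_zero]
      have hT0 := finset_eq_empty_of_indep_sum v (hvI _ hB'.indep)
        (hC'fin.toFinset ∆ hCffin.toFinset) hTsub hsum2
      have hC'Cf : C' = Cf := by
        rw [← Finset.bot_eq_empty] at hT0
        have := symmDiff_eq_bot.mp hT0
        have hcoe : (hC'fin.toFinset : Set α) = (hCffin.toFinset : Set α) := by rw [this]
        rwa [Set.Finite.coe_toFinset, Set.Finite.coe_toFinset] at hcoe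
      obtain ⟨g, hg, hgf⟩ : ∃ g ∈ Cf, g ≠ f := by
        by_contra h
        push_neg at h
        have hCfsing : Cf = {f} :=
          subset_antisymm (fun x hx => h x hx) (Set.singleton_subset_iff.mpr hfCf)
        exact hCf.1.not_indep (hCfsing ▸ hsingle f hf)
      have hgC' : g ∈ C' := hC'Cf ▸ hg
      rcases hC'S hgC' with h | h
      · exact h.2 hg
      · exact hgf (Set.mem_singleton_iff.mp h)
  have hECeq : M.E = C := subset_antisymm hEC hCE
  refine ⟨?_, ?_⟩
  · rw [hECeq]; exact hC.1
  · intro D hD hDE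
    obtain ⟨I, hI⟩ := M.exists_isBasis D hD.subset_ground
    have hIind := hI.indep
    have hnotsub : ¬ D ⊆ I := fun h => hD.not_indep (hIind.subset h)
    obtain ⟨x, hxD, hxI⟩ := Set.not_subset.mp hnotsub
    have hdepx : M.Dep (insert x I) := by
      rw [hIind.insert_dep_iff]
      exact ⟨hI.subset_closure hxD, hxI⟩
    obtain ⟨C'', hC''sub, hC''⟩ := hdc _ hdepx ((hindfin I hIind).insert x)
    have hC''D : C'' ⊆ D := hC''sub.trans (Set.insert_subset hxD hI.subset)
    have heC'' : e ∈ C'' := by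
      by_contra heC''
      refine hC''.1.not_indep ((hbase C hC heC).indep.subset ?_)
      intro y hy
      refine ⟨hECeq ▸ ((hC''D.trans hDE) hy), fun h => ?_⟩
      exact heC'' (Set.mem_singleton_iff.mp h ▸ hy)
    have hcard'' := hcardC C'' hC'' heC''
    have hEfin : M.E.Finite := hECeq ▸ hCfin
    have hEcard : M.E.ncard = rank M + 1 := by rw [hECeq, hCcard]
    have hfinal : C'' = M.E :=
      Set.eq_of_subset_of_ncard_le (hC''D.trans hDE) (by omega) hEfin
    exact subset_antisymm hDE (hfinal ▸ hC''D)

end LoosePaper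
end

section
/- Let q be a prime power and let M be a simple GF(q)-representable paving matroid with no coloops. Then r(M) ≤ q, or M is sparse paving. -/
namespace LoosePaper

open Set
open scoped Matroid

variable {α β : Type*}

private lemma dep_contains_circuit (M : Matroid α) :
    ∀ (n : ℕ) (X : Set α), X.Finite → X.ncard = n → M.Dep X →
      ∃ C, C ⊆ X ∧ Circuit M C := by
  intro n
  induction n using Nat.strong_induction_on with
  | _ n ih =>
    intro X hfin hcard hdep
    by_cases h : ∀ D, M.Dep D → D ⊆ X → D = X
    · exact ⟨X, subset_rfl, hdep, h⟩
    · push_neg at h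
      obtain ⟨D, hD, hDX, hne⟩ := h
      have hss : D ⊂ X := hDX.ssubset_of_ne hne
      have hlt : D.ncard < n := hcard ▸ Set.ncard_lt_ncard hss hfin
      obtain ⟨C, hCD, hC⟩ := ih _ hlt D (hfin.subset hDX) rfl hD
      exact ⟨C, hCD.trans hDX, hC⟩

private lemma rank_eq_ncard_of_base {M : Matroid α} {B : Set α} (hB : M.IsBase B) :
    rank M = B.ncard := by
  refine le_antisymm (Nat.sInf_le ⟨B, hB, rfl⟩) (le_csInf ⟨_, B, hB, rfl⟩ ?_)
  rintro m ⟨B', hB', rfl⟩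
  exact (hB.ncard_eq_ncard_of_isBase hB').le

private lemma indep_of_ncard_lt_rank {M : Matroid α} (hpav : Paving M) {X : Set α}
    (hX : X ⊆ M.E) (hfin : X.Finite) (hlt : X.ncard < rank M) : M.Indep X := by
  by_contra hni
  obtain ⟨C, hCX, hC⟩ := dep_contains_circuit M X.ncard X hfin rfl ⟨hni, hX⟩
  exact absurd ((hpav C hC).trans (Set.ncard_le_ncard hCX hfin)) (not_le.mpr hlt)

/-- Proposition 4.4: a simple `GF(q)`-representable paving matroid
with no coloops has rank at most `q`, or is sparse paving (both it and its dual are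
paving). -/
theorem paving_sparse_or_small_rank {α : Type*} (q : ℕ) (F : Type) [Field F]
    [Fintype F] (hq : Fintype.card F = q) (M : Matroid α) (hsimple : Simple M)
    (hrep : Representable M F) (hpaving : Paving M) (hcoloops : NoColoops M) :
    rank M ≤ q ∨ (Paving M ∧ Paving M.dual) := by
  classical
  by_cases hrk : rank M ≤ q
  · exact Or.inl hrk
  right
  refine ⟨hpaving, ?_⟩
  push_neg at hrk
  obtain ⟨B₀, hB₀⟩ := M.exists_isBase
  have hrankM : rank M = B₀.ncard := rank_eq_ncard_of_base hB₀
  set r : ℕ := B₀.ncard with hrdef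
  have hqr : q < r := hrankM ▸ hrk
  have hB₀fin : B₀.Finite := by
    by_contra h
    have h0 : r = 0 := Set.Infinite.ncard h
    omega
  by_cases hEfin : M.E.Finite
  swap
  · -- `M.E` infinite: the dual has rank `0`, so it is trivially paving.
    have hB' : M✶.IsBase (M.E \ B₀) := hB₀.compl_isBase_dual
    have hinf : (M.E \ B₀).Infinite := Set.Infinite.diff hEfin hB₀fin
    have h0 : rank M.dual = 0 := by
      rw [rank_eq_ncard_of_base hB', Set.Infinite.ncard hinf]
    intro C hC
    rw [h0]
    exact Nat.zero_le _
  -- main case: `M.E` finite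
  obtain ⟨ι, v, hv⟩ := hrep
  intro C hC
  have hCdep : M.dual.Dep C := hC.1
  have hCE : C ⊆ M.E := by
    have := hCdep.subset_ground
    rwa [Matroid.dual_ground] at this
  have hdualrank : rank M.dual = (M.E \ B₀).ncard :=
    rank_eq_ncard_of_base hB₀.compl_isBase_dual
  have hBE : B₀ ⊆ M.E := hB₀.subset_ground
  have hdr : rank M.dual = M.E.ncard - r := by
    rw [hdualrank, Set.ncard_diff hBE hB₀fin]
  by_contra hlt
  push_neg at hlt
  rw [hdr] at hlt
  -- the complement of `C` has at least `r + 1` elements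
  have hCfin : C.Finite := hEfin.subset hCE
  have hrE : r ≤ M.E.ncard := Set.ncard_le_ncard hBE hEfin
  have hcompl : (M.E \ C).ncard = M.E.ncard - C.ncard := Set.ncard_diff hCE hCfin
  have hCcard : C.ncard < M.E.ncard - r := hlt
  have hbig : r + 1 ≤ (M.E \ C).ncard := by omega
  obtain ⟨S, hSsub, hScard⟩ := Set.exists_subset_card_eq hbig
  have hSfin : S.Finite := (hEfin.diff (t := C)).subset hSsub
  have : Finite S := hSfin.to_subtype
  have hScard' : Nat.card S = r + 1 := by rw [Nat.card_coe_set_eq, hScard]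
  let e : S ≃ Fin (r + 1) := Finite.equivFinOfCardEq hScard'
  set s : Fin (r + 1) → α := fun i => ((e.symm i : S) : α) with hsdef
  have hsinj : Function.Injective s :=
    Subtype.val_injective.comp e.symm.injective
  have hsS : ∀ i, s i ∈ S := fun i => (e.symm i).2
  have hsE : ∀ i, s i ∈ M.E := fun i => (hSsub (hsS i)).1
  have hsC : ∀ i, s i ∉ C := fun i => (hSsub (hsS i)).2
  set w : Fin (r + 1) → ι → F := fun i => v (s i) with hwdef
  -- Fact A: a linear dependency among the `w i` vanishing at two places is zero.
  have hA : ∀ u : Fin (r + 1) → F, (∑ k, u k • w k = 0) →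
      ∀ i j : Fin (r + 1), i ≠ j → u i = 0 → u j = 0 → u = 0 := by
    intro u hsum i j hij hui huj
    set I : Finset (Fin (r + 1)) := Finset.univ \ {i, j} with hIdef
    have hIcard : I.card = r - 1 := by
      rw [hIdef, Finset.card_sdiff_of_subset (Finset.subset_univ _), Finset.card_univ,
        Fintype.card_fin, Finset.card_pair hij]
      omega
    set X : Set α := s '' (I : Set (Fin (r + 1))) with hXdef
    have hXE : X ⊆ M.E := by
      rintro x ⟨k, _, rfl⟩; exact hsE k
    have hXcard : X.ncard < r := by
      rw [hXdef, Set.ncard_image_of_injective _ hsinj, Set.ncard_coe_finset, hIcard]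
      omega
    have hXindep : M.Indep X :=
      indep_of_ncard_lt_rank hpaving hXE (hSfin.subset (by
        rintro x ⟨k, _, rfl⟩; exact hsS k)) (hrankM ▸ hXcard)
    have hli0 : LinearIndependent F (fun x : X => v x.1) := (hv _ hXE).mp hXindep
    have hli : LinearIndependent F (fun x : {y // y ∈ I} => w x.1) := by
      have := hli0.comp
        (fun x : {y // y ∈ I} => (⟨s x.1, ⟨x.1, Finset.mem_coe.mpr x.2, rfl⟩⟩ : X))
        (fun x y hxy => Subtype.ext (hsinj (Subtype.mk_eq_mk.mp hxy)))
      exact this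
    have hsum' : ∑ k ∈ I, u k • w k = ∑ k, u k • w k := by
      refine Finset.sum_subset (Finset.subset_univ I) ?_
      intro x _ hx
      have hx' : x = i ∨ x = j := by
        by_contra hcon
        push_neg at hcon
        exact hx (by simp [hIdef, hcon.1, hcon.2])
      rcases hx' with rfl | rfl
      · rw [hui, zero_smul]
      · rw [huj, zero_smul]
    have hz : ∀ x : {y // y ∈ I}, u x.1 = 0 := by
      refine Fintype.linearIndependent_iff.mp hli (fun x => u x.1) ?_
      rw [Finset.sum_coe_sort I (fun k => u k • w k), hsum', hsum]
    funext k
    by_cases hk : k ∈ I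
    · exact hz ⟨k, hk⟩
    · have hk' : k = i ∨ k = j := by
        by_contra hcon
        push_neg at hcon
        exact hk (by simp [hIdef, hcon.1, hcon.2])
      rcases hk' with rfl | rfl
      · exact hui
      · exact huj
  -- Fact B: for each index, there is a nonzero dependency vanishing there.
  have hBfact : ∀ i : Fin (r + 1), ∃ u : Fin (r + 1) → F,
      u ≠ 0 ∧ (∑ k, u k • w k = 0) ∧ u i = 0 := by
    intro i
    set I : Finset (Fin (r + 1)) := Finset.univ.erase i with hIdef
    have hIcard : I.card = r := by
      rw [hIdef, Finset.card_erase_of_mem (Finset.mem_univ _), Finset.card_univ,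
        Fintype.card_fin]
      omega
    set X : Set α := s '' (I : Set (Fin (r + 1))) with hXdef
    have hXE : X ⊆ M.E := by rintro x ⟨k, _, rfl⟩; exact hsE k
    have hXcard : X.ncard = r := by
      rw [hXdef, Set.ncard_image_of_injective _ hsinj, Set.ncard_coe_finset, hIcard]
    have hXdep : ¬ M.Indep X := by
      intro hind
      obtain ⟨B, hBbase, hXB⟩ := hind.exists_isBase_superset
      have hBcard : B.ncard = r := hBbase.ncard_eq_ncard_of_isBase hB₀
      have hBfin : B.Finite := hB₀.finite_of_finite hB₀fin hBbase
      have hXB' : X = B :=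
        Set.eq_of_subset_of_ncard_le hXB (by rw [hBcard, hXcard]) hBfin
      have hXdisj : Disjoint X C := by
        rw [Set.disjoint_left]
        rintro x ⟨k, _, rfl⟩
        exact hsC k
      have hCind : M✶.Indep C :=
        Matroid.dual_indep_iff_exists'.mpr
          ⟨hCE, B, hBbase, (hXB' ▸ hXdisj).symm⟩
      exact hCdep.1 hCind
    have hnli0 : ¬ LinearIndependent F (fun x : X => v x.1) :=
      fun h => hXdep ((hv _ hXE).mpr h)
    have hf : Function.Bijective
        (fun x : {y // y ∈ I} => (⟨s x.1, ⟨x.1, Finset.mem_coe.mpr x.2, rfl⟩⟩ : X)) := by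
      constructor
      · exact fun x y hxy => Subtype.ext (hsinj (Subtype.mk_eq_mk.mp hxy))
      · rintro ⟨x, ⟨k, hk, rfl⟩⟩
        exact ⟨⟨k, hk⟩, rfl⟩
    have hnli : ¬ LinearIndependent F (fun x : {y // y ∈ I} => w x.1) := by
      intro hli
      apply hnli0
      set eq := Equiv.ofBijective _ hf with heq
      have h2 := hli.comp eq.symm eq.symm.injective
      have h3 : (fun x : {y // y ∈ I} => w x.1) ∘ eq.symm = fun y : X => v y.1 := by
        funext y
        have h4 := congrArg Subtype.val (eq.apply_symm_apply y)
        simp only [Function.comp_apply, hwdef]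
        exact congrArg v h4
      rwa [h3] at h2
    obtain ⟨g, hgsum, x₀, hx₀⟩ := Fintype.not_linearIndependent_iff.mp hnli
    set u : Fin (r + 1) → F := fun k => if h : k ∈ I then g ⟨k, h⟩ else 0 with hudef
    refine ⟨u, ?_, ?_, ?_⟩
    · intro h0
      apply hx₀
      have h5 : u x₀.1 = g x₀ := dif_pos x₀.2
      rw [h0] at h5
      exact h5.symm
    · have h1 : ∑ k ∈ I, u k • w k = ∑ k, u k • w k := by
        refine Finset.sum_subset (Finset.subset_univ I) ?_
        intro x _ hx
        rw [hudef]; simp only [dif_neg hx, zero_smul]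
      rw [← h1, ← Finset.sum_coe_sort I (fun k => u k • w k)]
      have h2 : ∀ x : {y // y ∈ I}, u x.1 • w x.1 = g x • w x.1 := by
        intro x; rw [hudef]; simp only [dif_pos x.2]
      rw [Finset.sum_congr rfl (fun x _ => h2 x)]
      exact hgsum
    · rw [hudef]
      simp [hIdef]
  -- the two basic dependencies
  have hr1 : r - 1 < r + 1 := by omega
  obtain ⟨c, hc0, hcsum, hclast⟩ := hBfact (Fin.last r)
  obtain ⟨c', hc'0, hc'sum, hc'prev⟩ := hBfact ⟨r - 1, hr1⟩
  have hne : (⟨r - 1, hr1⟩ : Fin (r + 1)) ≠ Fin.last r := by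
    intro h
    have := congrArg Fin.val h
    simp only [Fin.val_last] at this
    omega
  have hc'last : c' (Fin.last r) ≠ 0 :=
    fun h => hc'0 (hA c' hc'sum _ _ hne hc'prev h)
  -- the projective-line map
  set g : Fin (r + 1) → Option F :=
    fun k => if c' k = 0 then none else some (c k / c' k) with hgdef
  have hginj : Function.Injective g := by
    intro i j hij
    by_contra hne'
    by_cases h1 : c' i = 0
    · have h2 : c' j = 0 := by
        by_contra h2
        rw [hgdef] at hij
        simp [h1, h2] at hij
      exact hc'0 (hA c' hc'sum i j hne' h1 h2)
    · have h2 : c' j ≠ 0 := by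
        intro h2
        rw [hgdef] at hij
        simp [h1, h2] at hij
      have ht : c i / c' i = c j / c' j := by
        rw [hgdef] at hij
        simp only [if_neg h1, if_neg h2, Option.some.injEq] at hij
        exact hij
      set t : F := c i / c' i with htdef
      have husum : ∑ k, (c k - t * c' k) • w k = 0 := by
        have : ∀ k, (c k - t * c' k) • w k = c k • w k - t • (c' k • w k) := by
          intro k
          rw [sub_smul, mul_smul]
        rw [Finset.sum_congr rfl (fun k _ => this k), Finset.sum_sub_distrib,
          ← Finset.smul_sum, hcsum, hc'sum, smul_zero, sub_zero]
      have hui : c i - t * c' i = 0 := by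
        rw [htdef, div_mul_cancel₀ _ h1, sub_self]
      have huj : c j - t * c' j = 0 := by
        rw [ht, div_mul_cancel₀ _ h2, sub_self]
      have hu0 := hA _ husum i j hne' hui huj
      have hck : ∀ k, c k = t * c' k := by
        intro k
        have h7 : c k - t * c' k = 0 := congrFun hu0 k
        exact sub_eq_zero.mp h7
      have ht0 : t = 0 := by
        have hl := hck (Fin.last r)
        rw [hclast] at hl
        rcases mul_eq_zero.mp hl.symm with h | h
        · exact h
        · exact absurd h hc'last
      exact hc0 (funext fun k => by rw [hck k, ht0, zero_mul]; rfl)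
  have hcard := Fintype.card_le_of_injective g hginj
  rw [Fintype.card_fin, Fintype.card_option, hq] at hcard
  omega

end LoosePaper
end

section
/- Let q be a prime power and let M be a simple GF(q)-representable matroid with no coloops that has two distinct loose elements e and f such that {e, f} is not a cocircuit of M. If M has a spanning circuit containing exactly one of e and f, then r(M) ≤ 2q − 1. -/
namespace LoosePaper

open Set
open scoped Matroid

variable {α β : Type*}

section Helpers

variable {α : Type*} {F : Type*} [Field F] {W : Type*} [AddCommGroup W] [Module F W] {v : α → W}

lemma notLI_of_finset (v : α → W) (u : Finset α) (ρ : α → F)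
    (hsum : ∑ c ∈ u, ρ c • v c = 0) {c₀ : α} (hc₀ : c₀ ∈ u) (hρ : ρ c₀ ≠ 0) :
    ¬ LinearIndependent F (fun x : (↑u : Set α) => v x.1) := by
  classical
  rw [show (fun x : (↑u : Set α) => v x.1) = (v ∘ (↑)) from rfl,
    (show ¬LinearIndependent F (v ∘ ((↑) : (↑u : Set α) → α)) ↔ ¬LinearIndepOn F v ↑u from Iff.rfl),
    linearDepOn_iff]
  refine ⟨Finsupp.onFinset u (fun x => if x ∈ u then ρ x else 0)
      (fun a ha => by by_contra h; simp [h] at ha), ?_, ?_, ?_⟩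
  · rw [Finsupp.mem_supported F]
    exact fun x hx => Finsupp.support_onFinset_subset hx
  · rw [Finset.sum_subset (Finsupp.support_onFinset_subset)]
    · rw [← hsum]
      refine Finset.sum_congr rfl fun x hx => ?_
      simp [Finsupp.onFinset_apply, if_pos hx]
    · intro x _ hx
      rw [Finsupp.notMem_support_iff.1 hx, zero_smul]
  · intro h0
    apply hρ
    have := DFunLike.congr_fun h0 c₀
    simpa [Finsupp.onFinset_apply, if_pos hc₀] using this

lemma rel_of_notLI {S : Set α}
    (h : ¬ LinearIndependent F (fun x : S => v x.1)) :
    ∃ l : α →₀ F, ↑l.support ⊆ S ∧ ∑ i ∈ l.support, l i • v i = 0 ∧ l ≠ 0 := by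
  rw [show (fun x : S => v x.1) = (v ∘ (↑)) from rfl,
    (show ¬LinearIndependent F (v ∘ ((↑) : S → α)) ↔ ¬LinearIndepOn F v S from Iff.rfl),
    linearDepOn_iff] at h
  obtain ⟨f, hf, hsum, hne⟩ := h
  exact ⟨f, (Finsupp.mem_supported F f).1 hf, hsum, hne⟩

lemma exists_circuit_subset_s10 (M : Matroid α) :
    ∀ n (S : Set α), S.Finite → S.ncard ≤ n → M.Dep S → ∃ D, D ⊆ S ∧ Circuit M D := by
  intro n
  induction n with
  | zero =>
    intro S hfin hcard hdep
    have : S = ∅ := by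
      rw [← Set.ncard_eq_zero hfin]; omega
    exact absurd (this ▸ M.empty_indep) hdep.not_indep
  | succ n ih =>
    intro S hfin hcard hdep
    by_cases hmin : ∀ D, M.Dep D → D ⊆ S → D = S
    · exact ⟨S, subset_rfl, hdep, hmin⟩
    · push_neg at hmin
      obtain ⟨D, hD, hDS, hne⟩ := hmin
      have hss : D ⊂ S := ssubset_of_subset_of_ne hDS hne
      have hlt : D.ncard < S.ncard := Set.ncard_lt_ncard hss hfin
      obtain ⟨D', hD'D, hD'⟩ := ih D (hfin.subset hDS) (by omega) hD
      exact ⟨D', hD'D.trans hDS, hD'⟩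

lemma key {ι : Type*} [Fintype F] (M : Matroid α) (v : α → ι → F)
    (hv : ∀ I, I ⊆ M.E → (M.Indep I ↔ LinearIndependent F (fun x : I => v x.1)))
    {C : Set α} (hC : Circuit M C) (hcl : M.closure C = M.E)
    {g : α} (hg : g ∈ M.E) (hgC : g ∉ C)
    (hloose : ∀ D, Circuit M D → g ∈ D → rank M ≤ D.ncard) :
    rank M ≤ 2 * Fintype.card F - 1 := by
  classical
  have hCE : C ⊆ M.E := hC.1.subset_ground
  -- the circuit relation l₀
  have hnotLI : ¬ LinearIndependent F (fun x : C => v x.1) :=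
    fun h => hC.1.not_indep ((hv C hCE).2 h)
  obtain ⟨l₀, hl₀supp, hl₀sum, hl₀ne⟩ := rel_of_notLI hnotLI
  set s : Finset α := l₀.support with hs
  -- the support of l₀ is all of C
  have hsC : (↑s : Set α) = C := by
    refine hC.2 _ ?_ hl₀supp
    rw [Matroid.dep_iff]
    refine ⟨fun hI => ?_, hl₀supp.trans hCE⟩
    obtain ⟨c, hc⟩ := Finsupp.ne_iff.1 hl₀ne
    have hcs : c ∈ s := Finsupp.mem_support_iff.2 (by simpa using hc)
    exact notLI_of_finset v s l₀ hl₀sum hcs (by simpa using hc)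
      ((hv _ (hl₀supp.trans hCE)).1 hI)
  have hμ : ∀ c ∈ s, l₀ c ≠ 0 := fun c hc => Finsupp.mem_support_iff.1 hc
  have hsne : s.Nonempty := by
    obtain ⟨c, hc⟩ := Finsupp.ne_iff.1 hl₀ne
    exact ⟨c, Finsupp.mem_support_iff.2 (by simpa using hc)⟩
  obtain ⟨c₀, hc₀⟩ := hsne
  have hc₀C : c₀ ∈ C := by rw [← hsC]; exact_mod_cast hc₀
  -- B0 is a base
  set B0 : Set α := C \ {c₀} with hB0
  have hB0coe : (↑(s.erase c₀) : Set α) = B0 := by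
    rw [Finset.coe_erase, hsC]
  have hB0E : B0 ⊆ M.E := diff_subset.trans hCE
  have hB0indep : M.Indep B0 := by
    rw [← Matroid.not_dep_iff hB0E]
    intro hdep
    have heq : C \ {c₀} = C := hC.2 _ hdep diff_subset
    have h2 : c₀ ∈ C \ {c₀} := by rw [heq]; exact hc₀C
    exact h2.2 rfl
  have hc₀cl : c₀ ∈ M.closure B0 := by
    rw [hB0indep.mem_closure_iff]
    left
    have hins : insert c₀ B0 = C := by
      rw [hB0, Set.insert_diff_singleton, Set.insert_eq_of_mem hc₀C]
    rw [hins]; exact hC.1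
  have hB0base : M.IsBase B0 := by
    refine hB0indep.isBase_of_ground_subset_closure ?_
    have : M.closure (insert c₀ B0) = M.closure B0 :=
      Matroid.closure_insert_eq_of_mem_closure hc₀cl
    rw [← hcl, show C = insert c₀ B0 by
      rw [hB0, Set.insert_diff_singleton, Set.insert_eq_of_mem hc₀C], this]
  -- rank computations
  have hB0fin : B0.Finite := by rw [← hB0coe]; exact (s.erase c₀).finite_toSet
  have hrank : rank M = B0.ncard := by
    refine le_antisymm (Nat.sInf_le ⟨B0, hB0base, rfl⟩) (le_csInf ⟨_, B0, hB0base, rfl⟩ ?_)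
    rintro n ⟨B, hB, rfl⟩
    exact le_of_eq (hB0base.ncard_eq_ncard_of_isBase hB)
  have hscard : s.card = rank M + 1 := by
    have h1 : B0.ncard = (s.erase c₀).card := by rw [← hB0coe, Set.ncard_coe_finset]
    have h2 : (s.erase c₀).card = s.card - 1 := Finset.card_erase_of_mem hc₀
    have h3 : 1 ≤ s.card := Finset.card_pos.2 ⟨c₀, hc₀⟩
    omega
  -- the element g in terms of B0
  have hgB0 : g ∉ B0 := fun h => hgC h.1
  have hdepins : M.Dep (insert g B0) := hB0base.insert_dep ⟨hg, hgB0⟩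
  have hinsE : insert g B0 ⊆ M.E := insert_subset hg hB0E
  obtain ⟨l₁, hl₁supp, hl₁sum, hl₁ne⟩ := rel_of_notLI
    (fun h => hdepins.not_indep ((hv _ hinsE).2 h))
  have hgl₁ : g ∈ l₁.support := by
    by_contra hgs
    have hsub : (↑l₁.support : Set α) ⊆ B0 := by
      intro x hx
      rcases hl₁supp hx with h | h
      · exact absurd (h ▸ hx) (by exact_mod_cast hgs)
      · exact h
    obtain ⟨c, hc⟩ := Finsupp.ne_iff.1 hl₁ne
    have hcs : c ∈ l₁.support := Finsupp.mem_support_iff.2 (by simpa using hc)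
    exact notLI_of_finset v l₁.support l₁ hl₁sum hcs (by simpa using hc)
      ((hv _ (hsub.trans hB0E)).1 (hB0indep.subset hsub))
  have ha0 : l₁ g ≠ 0 := Finsupp.mem_support_iff.1 hgl₁
  set lam : α → F := fun c => -((l₁ g)⁻¹ * l₁ c) with hlam
  have herasesub : l₁.support.erase g ⊆ s := by
    intro x hx
    have hx1 := Finset.mem_erase.1 hx
    rcases hl₁supp hx1.2 with h | h
    · exact absurd h hx1.1
    · have : x ∈ C := h.1
      rw [← hsC] at this; exact_mod_cast this
  have hvg : v g = ∑ c ∈ s, lam c • v c := by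
    have h2 : v g = ∑ x ∈ l₁.support.erase g, lam x • v x := by
      have h1 : l₁ g • v g + ∑ x ∈ l₁.support.erase g, l₁ x • v x = 0 := by
        rw [Finset.add_sum_erase _ (fun x => l₁ x • v x) hgl₁]; exact hl₁sum
      have h1' : l₁ g • v g = ∑ x ∈ l₁.support.erase g, -(l₁ x • v x) := by
        rw [Finset.sum_neg_distrib]; exact eq_neg_of_add_eq_zero_left h1
      have h3 : v g = (l₁ g)⁻¹ • ∑ x ∈ l₁.support.erase g, -(l₁ x • v x) := by
        rw [← h1', inv_smul_smul₀ ha0]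
      rw [h3, Finset.smul_sum]
      refine Finset.sum_congr rfl fun x _ => ?_
      show (l₁ g)⁻¹ • -(l₁ x • v x) = -((l₁ g)⁻¹ * l₁ x) • v x
      rw [neg_smul, mul_smul, smul_neg]
    rw [h2]
    refine Finset.sum_subset herasesub fun x hxs hxe => ?_
    have hxg : x ≠ g := by
      intro h; subst h
      have : x ∈ C := by rw [← hsC]; exact_mod_cast hxs
      exact hgC this
    have : x ∉ l₁.support := fun h => hxe (Finset.mem_erase.2 ⟨hxg, h⟩)
    rw [hlam]; simp [Finsupp.notMem_support_iff.1 this]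
  have hgs : g ∉ s := by
    intro h
    exact hgC (by rw [← hsC]; exact_mod_cast h)
  -- for each t, few vanishing coefficients
  have hmiss : ∀ t : F, (s.filter (fun c => lam c + t * l₀ c = 0)).card ≤ 2 := by
    intro t
    set w : α → F := fun c => lam c + t * l₀ c with hw
    have hvgw : v g = ∑ c ∈ s, w c • v c := by
      have : ∑ c ∈ s, w c • v c
          = (∑ c ∈ s, lam c • v c) + t • ∑ c ∈ s, l₀ c • v c := by
        rw [Finset.smul_sum, ← Finset.sum_add_distrib]
        refine Finset.sum_congr rfl fun c _ => ?_
        rw [hw]; simp [add_smul, mul_smul]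
      rw [this, hl₀sum, smul_zero, add_zero, hvg]
    set st : Finset α := s.filter (fun c => w c ≠ 0) with hst
    have hvst : v g = ∑ c ∈ st, w c • v c := by
      rw [hvgw, Finset.sum_filter_of_ne]
      intro x _ hx
      intro h0; exact hx (by rw [h0, zero_smul])
    have hgst : g ∉ st := fun h => hgs (Finset.mem_of_mem_filter _ h)
    -- insert g st is dependent
    set S : Set α := insert g (↑st : Set α) with hS
    have hSE : S ⊆ M.E := insert_subset hg ((Finset.coe_subset.2 (Finset.filter_subset _ _)).trans (hsC ▸ hCE))
    have hSdep : M.Dep S := by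
      rw [Matroid.dep_iff]
      refine ⟨fun hI => ?_, hSE⟩
      have hLI := (hv _ hSE).1 hI
      have hcoe : ((↑(insert g st) : Set α)) = S := by rw [Finset.coe_insert]
      refine notLI_of_finset v (insert g st) (fun c => if c = g then -1 else w c)
        ?_ (Finset.mem_insert_self g st) (by simp) (by rw [hcoe]; exact hLI)
      show (∑ c ∈ insert g st, (if c = g then (-1 : F) else w c) • v c) = 0
      rw [Finset.sum_insert hgst]
      have e2 : ∑ c ∈ st, (if c = g then (-1 : F) else w c) • v c
          = ∑ c ∈ st, w c • v c :=
        Finset.sum_congr rfl fun c hc => by rw [if_neg (fun h : c = g => hgst (h ▸ hc))]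
      rw [e2, if_pos rfl, ← hvst, neg_one_smul, neg_add_cancel]
    have hSfin : S.Finite := (st.finite_toSet).insert g
    obtain ⟨D, hDS, hD⟩ := exists_circuit_subset_s10 M S.ncard S hSfin le_rfl hSdep
    have hDcard : rank M ≤ D.ncard := by
      by_cases hgD : g ∈ D
      · exact hloose D hD hgD
      · have hDC : D ⊆ C := by
          intro x hx
          rcases hDS hx with h | h
          · exact absurd (h ▸ hx) hgD
          · rw [← hsC]
            exact Finset.coe_subset.2 (Finset.filter_subset _ _) h
        have : D = C := hC.2 D hD.1 hDC
        rw [this, ← hsC, Set.ncard_coe_finset]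
        omega
    have hSncard : S.ncard = st.card + 1 := by
      rw [hS, Set.ncard_insert_of_notMem (by exact_mod_cast hgst) (st.finite_toSet),
        Set.ncard_coe_finset]
    have hDle : D.ncard ≤ S.ncard := Set.ncard_le_ncard hDS hSfin
    have hpart : (s.filter (fun c => w c = 0)).card + st.card = s.card := by
      rw [hst]
      exact Finset.card_filter_add_card_filter_not (fun c => w c = 0)
    have h2 : (s.filter (fun c => w c = 0)).card ≤ 2 := by omega
    exact h2
  -- the fiber-counting map
  set φ : α → F := fun c => -(lam c) * (l₀ c)⁻¹ with hφ
  have hcard2 : s.card ≤ 2 * Fintype.card F := by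
    have := Finset.card_le_mul_card_image_of_maps_to
      (f := φ) (s := s) (t := (Finset.univ : Finset F))
      (fun a _ => Finset.mem_univ _) 2 ?_
    · simpa [Finset.card_univ] using this
    · intro t _
      refine le_trans (Finset.card_le_card ?_) (hmiss t)
      intro c hc
      have hcs := (Finset.mem_filter.1 hc).1
      have hct := (Finset.mem_filter.1 hc).2
      refine Finset.mem_filter.2 ⟨hcs, ?_⟩
      rw [← hct, hφ]
      field_simp [hμ c hcs]
      ring
  omega


end Helpers

/-- Remark 4.5: if a simple `GF(q)`-representable matroid with no
coloops has two distinct loose elements `e` and `f` such that `{e, f}` is not a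
cocircuit, and has a spanning circuit containing exactly one of `e` and `f`, then
`r(M) ≤ 2q - 1`. -/
theorem two_loose_spanning_circuit {α : Type*} (q : ℕ) (F : Type) [Field F]
    [Fintype F] (hq : Fintype.card F = q) (M : Matroid α) (hsimple : Simple M)
    (hrep : Representable M F) (hcoloops : NoColoops M)
    (e f : α) (hef : e ≠ f) (he : Loose M e) (hf : Loose M f)
    (hnotcocircuit : ¬ Circuit M.dual {e, f})
    (hspan : ∃ C, Circuit M C ∧ M.closure C = M.E ∧
      ((e ∈ C ∧ f ∉ C) ∨ (f ∈ C ∧ e ∉ C))) :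
    rank M ≤ 2 * q - 1 := by
  obtain ⟨ι, v, hv⟩ := hrep
  obtain ⟨C, hC, hcl, hcase⟩ := hspan
  rw [← hq]
  rcases hcase with ⟨heC, hfC⟩ | ⟨hfC, heC⟩
  · exact key M v hv hC hcl hf.1 hfC hf.2
  · exact key M v hv hC hcl he.1 heC he.2

end LoosePaper
end

section
/- Assume the ternary representation setup. For k ≥ 1, let j be a linear combination with all coefficients in {1, −1} of k distinct columns of Q other than e^P, and let j' be the vector obtained from j by deleting its first entry. Then, for each sign, j' has at most k+1 entries of that sign. Moreover, if the first entry of j is zero, then for each sign j itself has at most k entries of that sign. -/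
namespace LoosePaper

open Set
open scoped Matroid

variable {α β : Type*}

/-- If `v e` is in the span of the columns of `X`, then `e` is in the matroid closure of `X`. -/
lemma mem_closure_of_span {γ : Type*} {M : Matroid γ} {r : ℕ} (v : γ → Fin r → ZMod 3)
    (hrep : ∀ I, I ⊆ M.E → (M.Indep I ↔ LinearIndependent (ZMod 3) (fun x : I => v x.1)))
    {X : Set γ} (hX : X ⊆ M.E) {e : γ} (he : e ∈ M.E)
    (hspan : v e ∈ Submodule.span (ZMod 3) (v '' X)) : e ∈ M.closure X := by
  by_contra hecl
  obtain ⟨I, hI⟩ := M.exists_isBasis X hX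
  have hIX : I ⊆ X := hI.subset
  have hIE : I ⊆ M.E := hIX.trans hX
  have hclIX : M.closure I = M.closure X := hI.closure_eq_closure
  have heI : e ∉ I := fun h => hecl (M.subset_closure X hX (hIX h))
  -- the columns of I are linearly independent
  have hIind : LinearIndependent (ZMod 3) (fun x : I => v x.1) := (hrep I hIE).mp hI.indep
  -- insert e I is independent
  have hins : M.Indep (insert e I) := by
    rw [hI.indep.insert_indep_iff]
    exact Or.inl ⟨he, fun h => hecl (hclIX ▸ h)⟩
  have hinsLI : LinearIndependent (ZMod 3) (fun x : (insert e I : Set γ) => v x.1) :=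
    (hrep _ (insert_subset he hIE)).mp hins
  have heIspan : v e ∉ Submodule.span (ZMod 3) (v '' I) :=
    ((linearIndepOn_insert (f := v) heI).mp hinsLI).2
  -- every column of X is in the span of columns of I
  have hXspan : v '' X ⊆ (Submodule.span (ZMod 3) (v '' I) : Set (Fin r → ZMod 3)) := by
    rintro _ ⟨x, hx, rfl⟩
    by_cases hxI : x ∈ I
    · exact Submodule.subset_span ⟨x, hxI, rfl⟩
    · have hxcl : x ∈ M.closure I := hclIX ▸ M.subset_closure X hX hx
      have hdep : ¬ M.Indep (insert x I) := by
        intro hind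
        rw [hI.indep.insert_indep_iff] at hind
        rcases hind with ⟨-, h⟩ | h
        · exact h hxcl
        · exact hxI h
      have : ¬ LinearIndependent (ZMod 3) (fun y : (insert x I : Set γ) => v y.1) := by
        intro h
        exact hdep ((hrep _ (insert_subset (hX hx) hIE)).mpr h)
      change ¬ LinearIndepOn (ZMod 3) v (insert x I) at this
      rw [linearIndepOn_insert hxI] at this
      push_neg at this
      exact this hIind
  exact heIspan (Submodule.span_le.mpr hXspan hspan)


/-- If `e ∈ cl(X) \ X` with `X` a finite subset of the ground set, there is a circuit
through `e` inside `insert e X`. -/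
lemma exists_circuit_through {γ : Type*} {M : Matroid γ} {X₀ : Finset γ} {e : γ}
    (hXE : ↑X₀ ⊆ M.E) (he : e ∈ M.E) (heX : e ∉ X₀)
    (hecl : e ∈ M.closure ↑X₀) :
    ∃ C : Set γ, Circuit M C ∧ e ∈ C ∧ C.ncard ≤ X₀.card + 1 := by
  classical
  have hex : ∃ n, ∃ Y : Finset γ, (Y ⊆ X₀ ∧ e ∈ M.closure ↑Y) ∧ Y.card = n :=
    ⟨X₀.card, X₀, ⟨Finset.Subset.refl _, hecl⟩, rfl⟩
  obtain ⟨Y, ⟨hYX, hYcl⟩, hYcard⟩ := Nat.find_spec hex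
  have hmin : ∀ Y' : Finset γ, Y' ⊆ X₀ → e ∈ M.closure ↑Y' → Nat.find hex ≤ Y'.card :=
    fun Y' h1 h2 => Nat.find_min' hex ⟨Y', ⟨h1, h2⟩, rfl⟩
  have hYE : ↑Y ⊆ M.E := (Finset.coe_subset.mpr hYX).trans hXE
  have heY : e ∉ (↑Y : Set γ) := fun h => heX (hYX h)
  -- Y is independent
  have hYindep : M.Indep ↑Y := by
    obtain ⟨I, hI⟩ := M.exists_isBasis ↑Y hYE
    have hIfin : I.Finite := Y.finite_toSet.subset hI.subset
    have hI0 : hIfin.toFinset ⊆ Y := by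
      rw [← Finset.coe_subset, hIfin.coe_toFinset]; exact hI.subset
    have hIcl : e ∈ M.closure ↑hIfin.toFinset := by
      rw [hIfin.coe_toFinset, hI.closure_eq_closure]; exact hYcl
    have := hmin hIfin.toFinset (hI0.trans hYX) hIcl
    have hcard : Y.card ≤ hIfin.toFinset.card := by omega
    have : hIfin.toFinset = Y := Finset.eq_of_subset_of_card_le hI0 hcard
    have hIY : I = ↑Y := by rw [← hIfin.coe_toFinset, this]
    rw [← hIY]; exact hI.indep
  refine ⟨insert e ↑Y, ⟨?_, ?_⟩, mem_insert _ _, ?_⟩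
  · rw [hYindep.insert_dep_iff]; exact ⟨hYcl, heY⟩
  · intro D hD hDC
    by_cases heD : e ∈ D
    · have hD1 : D \ {e} ⊆ ↑Y := by
        intro x hx
        rcases hDC hx.1 with h | h
        · exact absurd h hx.2
        · exact h
      have hind : M.Indep (D \ {e}) := hYindep.subset hD1
      have hdep : M.Dep (insert e (D \ {e})) := by
        rwa [insert_diff_singleton, insert_eq_self.mpr heD]
      have hecl' : e ∈ M.closure (D \ {e}) := by
        rw [hind.insert_dep_iff] at hdep; exact hdep.1
      have hfin : (D \ {e}).Finite := Y.finite_toSet.subset hD1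
      have hsub : hfin.toFinset ⊆ Y := by
        rw [← Finset.coe_subset, hfin.coe_toFinset]; exact hD1
      have hm := hmin hfin.toFinset (hsub.trans hYX) (by rwa [hfin.coe_toFinset])
      have : hfin.toFinset = Y := Finset.eq_of_subset_of_card_le hsub (by omega)
      have hDe : D \ {e} = ↑Y := by rw [← hfin.coe_toFinset, this]
      rw [← hDe, insert_diff_singleton, insert_eq_self.mpr heD]
    · have hDY : D ⊆ ↑Y := fun x hx => (hDC hx).resolve_left (fun h => heD (h ▸ hx))
      exact absurd (hYindep.subset hDY) hD.not_indep
  · calc (insert e (↑Y : Set γ)).ncard ≤ (↑Y : Set γ).ncard + 1 :=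
          Set.ncard_insert_le _ _
      _ = Y.card + 1 := by rw [Set.ncard_coe_finset]
      _ ≤ X₀.card + 1 := by have := Finset.card_le_card hYX; omega

/-- Sublemma 3.2.1: in the ternary representation setup, a
`{1, -1}`-linear combination `j` of `k` distinct columns of `Q` other than `e^P`
has, for each sign, at most `k + 1` entries of that sign after deleting the first
entry; and if the first entry of `j` is zero, then `j` itself has at most `k`
entries of each sign. -/
theorem ternary_setup_combination {α : Type*} (r : ℕ) (hr : 5 ≤ r) (M : Matroid α) (hsimple : Simple M)
    (e : α) (hloose : Loose M e) (hrank : rank M = r)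
    (v : α → Fin r → ZMod 3)
    (hrep : ∀ I, I ⊆ M.E →
      (M.Indep I ↔ LinearIndependent (ZMod 3) (fun x : I => v x.1)))
    (b : Fin r → α) (hbinj : Function.Injective b)
    (hbase : M.IsBase (Set.range b)) (heb : e ∉ Set.range b)
    (hstd : ∀ i j : Fin r, v (b i) j = if j = i then 1 else 0)
    (he0 : v e ⟨0, by omega⟩ = 0)
    (he1 : ∀ i : Fin r, i ≠ ⟨0, by omega⟩ → v e i = 1)
    (k : ℕ) (hk : 1 ≤ k) (S : Finset α) (hScard : S.card = k)
    (hSE : ↑S ⊆ M.E) (hSb : ∀ f ∈ S, f ∉ Set.range b) (hSe : e ∉ S)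
    (c : α → ZMod 3) (hc : ∀ f ∈ S, c f = 1 ∨ c f = -1)
    (j : Fin r → ZMod 3) (hj : j = ∑ f ∈ S, c f • v f) :
    ∀ s : ZMod 3, s = 1 ∨ s = -1 →
      ({i : Fin r | i ≠ ⟨0, by omega⟩ ∧ j i = s}.ncard ≤ k + 1 ∧
        (j ⟨0, by omega⟩ = 0 → {i : Fin r | j i = s}.ncard ≤ k)) := by
  classical
  intro s hs
  have hss : s * s = 1 := by rcases hs with rfl | rfl <;> decide
  have hs0 : s ≠ 0 := by rcases hs with rfl | rfl <;> decide
  set i0 : Fin r := ⟨0, by omega⟩ with hi0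
  set Z : Finset (Fin r) := Finset.univ.filter (fun i => j i - s * v e i ≠ 0) with hZdef
  set X₀ : Finset α := S ∪ Z.image b with hX₀def
  -- the key linear identity
  have hve : v e = (∑ f ∈ S, (s * c f) • v f) - ∑ i ∈ Z, (s * (j i - s * v e i)) • v (b i) := by
    funext t
    have h1 : (∑ f ∈ S, (s * c f) • v f) t = s * j t := by
      rw [hj, Finset.sum_apply, Finset.sum_apply, Finset.mul_sum]
      refine Finset.sum_congr rfl fun f _ => ?_
      simp [smul_eq_mul, mul_assoc]
    have h2 : (∑ i ∈ Z, (s * (j i - s * v e i)) • v (b i)) t = s * (j t - s * v e t) := by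
      rw [Finset.sum_apply]
      simp only [Pi.smul_apply, smul_eq_mul, hstd, mul_ite, mul_one, mul_zero]
      rw [Finset.sum_ite_eq]
      by_cases ht : t ∈ Z
      · simp [ht]
      · have : j t - s * v e t = 0 := by
          by_contra h
          exact ht (by simp [hZdef, h])
        simp [ht, this]
    rw [Pi.sub_apply, h1, h2]
    linear_combination (-(v e t)) * hss
  have hXE : ↑X₀ ⊆ M.E := by
    intro x hx
    rw [Finset.mem_coe, hX₀def, Finset.mem_union] at hx
    rcases hx with hx | hx
    · exact hSE hx
    · obtain ⟨i, _, rfl⟩ := Finset.mem_image.mp hx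
      exact hbase.subset_ground ⟨i, rfl⟩
  have heX : e ∉ X₀ := by
    rw [hX₀def, Finset.mem_union]
    rintro (h | h)
    · exact hSe h
    · obtain ⟨i, _, hbi⟩ := Finset.mem_image.mp h
      exact heb ⟨i, hbi⟩
  have hspan : v e ∈ Submodule.span (ZMod 3) (v '' ↑X₀) := by
    rw [hve]
    refine Submodule.sub_mem _
      (Submodule.sum_mem _ fun f hf => Submodule.smul_mem _ _ (Submodule.subset_span
        ⟨f, Finset.mem_coe.mpr (Finset.mem_union_left _ hf), rfl⟩))
      (Submodule.sum_mem _ fun i hi => Submodule.smul_mem _ _ (Submodule.subset_span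
        ⟨b i, Finset.mem_coe.mpr (Finset.mem_union_right _ (Finset.mem_image_of_mem b hi)), rfl⟩))
  have hecl : e ∈ M.closure ↑X₀ := mem_closure_of_span v hrep hXE hloose.1 hspan
  obtain ⟨C, hC, heC, hCcard⟩ := exists_circuit_through hXE hloose.1 heX hecl
  have hrC : r ≤ C.ncard := hrank ▸ hloose.2 C hC heC
  have hXcard : X₀.card ≤ k + Z.card := by
    calc X₀.card ≤ S.card + (Z.image b).card := Finset.card_union_le _ _
      _ ≤ k + Z.card := by
          have := Finset.card_image_le (s := Z) (f := b)
          omega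
  have hkey : r ≤ k + Z.card + 1 := by omega
  have hnotZ : ∀ i : Fin r, i ≠ i0 → j i = s → i ∉ Z := by
    intro i hne hji
    simp only [hZdef, Finset.mem_filter, Finset.mem_univ, true_and, not_not]
    rw [hji, he1 i hne, mul_one, sub_self]
  constructor
  · set T : Finset (Fin r) := Finset.univ.filter (fun i => i ≠ i0 ∧ j i = s) with hTdef
    have hset : {i : Fin r | i ≠ i0 ∧ j i = s} = ↑T := by
      ext i; simp [hTdef]
    have hdisj : Disjoint Z T := by
      rw [Finset.disjoint_right]
      intro i hi
      rw [hTdef, Finset.mem_filter] at hi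
      exact hnotZ i hi.2.1 hi.2.2
    have hcard : Z.card + T.card ≤ r := by
      calc Z.card + T.card = (Z ∪ T).card := (Finset.card_union_of_disjoint hdisj).symm
        _ ≤ (Finset.univ : Finset (Fin r)).card := Finset.card_le_univ _
        _ = r := by simp
    rw [hset, Set.ncard_coe_finset]
    omega
  · intro hj0
    set T' : Finset (Fin r) := Finset.univ.filter (fun i => j i = s) with hT'def
    have hset : {i : Fin r | j i = s} = ↑T' := by
      ext i; simp [hT'def]
    have h0T' : i0 ∉ T' := by
      rw [hT'def, Finset.mem_filter]
      rintro ⟨-, h⟩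
      rw [hj0] at h
      exact hs0 h.symm
    have h0Z : i0 ∉ Z := by
      simp only [hZdef, Finset.mem_filter, Finset.mem_univ, true_and, not_not]
      rw [hj0, he0, mul_zero, sub_zero]
    have hdisj : Disjoint Z T' := by
      rw [Finset.disjoint_right]
      intro i hi
      rw [hT'def, Finset.mem_filter] at hi
      have hne : i ≠ i0 := by
        rintro rfl
        rw [hj0] at hi
        exact hs0 hi.2.symm
      exact hnotZ i hne hi.2
    have hcard : 1 + (Z.card + T'.card) ≤ r := by
      calc 1 + (Z.card + T'.card) = (insert i0 (Z ∪ T')).card := by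
            rw [Finset.card_insert_of_notMem (by
              rw [Finset.mem_union]; rintro (h | h); exacts [h0Z h, h0T' h]),
              Finset.card_union_of_disjoint hdisj]
            omega
        _ ≤ (Finset.univ : Finset (Fin r)).card := Finset.card_le_univ _
        _ = r := by simp
    rw [hset, Set.ncard_coe_finset]
    omega

end LoosePaper
end
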